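/- arXiv:1707.03956 — 5 statements merged into one kernel-verified Lean document; each statement's English description precedes it below -/
import Mathlib

section
/- Let q ≥ 2, let 1 ≤ k₁ < k₂ ≤ 3, and let x be a word over Σ_q. Suppose x' = T_{i₂,k₂}(T_{i₁,k₁}(x)) for some positions i₁, i₂ (i.e., x' is obtained from x by a tandem duplication of length k₁ followed by one of length k₂). Then there exist t ≥ 1, lengths 3 ≥ ℓ₁ ≥ ℓ₂ ≥ ⋯ ≥ ℓ_t ≥ 1 and positions j₁, j₂, …, j_t such that x' = T_{j_t,ℓ_t} ∘ T_{j_{t−1},ℓ_{t−1}} ∘ ⋯ ∘ T_{j₁,ℓ₁}(x). -/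
/-- Tandem duplication of the length-`k` block starting at position `i`:
`x = u v w` with `|u| = i`, `|v| = k` is sent to `u v v w`. -/
def DupAt {α : Type*} (i k : ℕ) (x y : List α) : Prop :=
  ∃ u v w : List α, x = u ++ v ++ w ∧ u.length = i ∧ v.length = k ∧ y = u ++ v ++ v ++ w

/-- A single tandem duplication of some length between `1` and `k`. -/
def DupLE {α : Type*} (k : ℕ) (x y : List α) : Prop :=
  ∃ u v w : List α, x = u ++ v ++ w ∧ 1 ≤ v.length ∧ v.length ≤ k ∧ y = u ++ v ++ v ++ w

/-- A single tandem duplication of length exactly `k` whose duplicated block has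
pairwise distinct symbols. -/
def DupD {α : Type*} (k : ℕ) (x y : List α) : Prop :=
  ∃ u v w : List α, x = u ++ v ++ w ∧ v.length = k ∧ v.Nodup ∧ y = u ++ v ++ v ++ w

/-- `x ⇒*_{≤k} y`: `y` is obtained from `x` by finitely many tandem duplications of
length at most `k`. -/
def DerivLE {α : Type*} (k : ℕ) : List α → List α → Prop := Relation.ReflTransGen (DupLE k)

/-- `x ⇒*_{k_d} y`: finitely many tandem duplications of length exactly `k`, each
duplicated block having pairwise distinct symbols. -/
def DerivD {α : Type*} (k : ℕ) : List α → List α → Prop := Relation.ReflTransGen (DupD k)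

/-- `x` is `≤k`-irreducible: it contains no square `v v` with `1 ≤ |v| ≤ k`. -/
def IrredLE {α : Type*} (k : ℕ) (x : List α) : Prop :=
  ¬ ∃ u v w : List α, 1 ≤ v.length ∧ v.length ≤ k ∧ x = u ++ v ++ v ++ w

/-- The set of `≤k`-roots of `x`. -/
def RootsLE {α : Type*} (k : ℕ) (x : List α) : Set (List α) :=
  {z | IrredLE k z ∧ DerivLE k z x}

/-- `x` and `y` are `≤k`-confusable. -/
def Confusable {α : Type*} (k : ℕ) (x y : List α) : Prop :=
  ∃ z, DerivLE k x z ∧ DerivLE k y z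

/-- `r` contains at least three distinct symbols. -/
def Has3 {α : Type*} [DecidableEq α] (r : List α) : Prop := 3 ≤ r.toFinset.card

/-- The region `Reg(r)` of a `≤3`-irreducible word `r` with at least three distinct
symbols. -/
def Reg {α : Type*} [DecidableEq α] (r : List α) : List α :=
  if r[0]? = r[2]? then
    if r[1]? ≠ r[4]? then r.take 4
    else if r[2]? ≠ r[5]? then r.take 5
    else r.take 6
  else
    if r[0]? ≠ r[3]? then r.take 3
    else if r[1]? ≠ r[4]? then r.take 4
    else r.take 5

/-- `main(r)`: the first length-3 substring of `r` with pairwise distinct symbols. -/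
def mainSub {α : Type*} [DecidableEq α] (r : List α) : List α :=
  if r[0]? = r[2]? then (r.drop 1).take 3 else r.take 3

/-- The number of occurrences of `z` as a contiguous substring of `x`. -/
def Count {α : Type*} [DecidableEq α] (z x : List α) : ℕ :=
  ((List.range (x.length + 1)).filter fun i => decide ((x.drop i).take z.length = z)).length

/-- `Count(rot(z), x)` for a length-3 word `z = abc`:
occurrences of `abc`, `bca` and `cab` in `x`. -/
def CountRot {α : Type*} [DecidableEq α] (z x : List α) : ℕ :=
  Count z x + Count (z.rotate 1) x + Count (z.rotate 2) x

/-- `ExtPref(g, x)`: the longest prefix of `x` belonging to `D*_{≤3}(g)`. -/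
noncomputable def ExtPref {α : Type*} (g x : List α) : List α :=
  letI : DecidablePred fun n => DerivLE 3 g (x.take n) := Classical.decPred _
  x.take (Nat.findGreatest (fun n => DerivLE 3 g (x.take n)) x.length)

/-- The symbol `a` when `Reg r = w (a b c)^ℓ a b`, i.e. the second-to-last symbol
of `Reg r`. -/
def regA {α : Type*} [DecidableEq α] [Inhabited α] (r : List α) : α :=
  (Reg r).reverse.getD 1 default

/-- The special prefix `*Pref(r, x)`: with `p = ExtPref(Reg r, x)` and `p_i` the last
occurrence of the symbol `a` in `p`, this is `p₁ ⋯ p_{i-1}`. -/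
noncomputable def starPref {α : Type*} [DecidableEq α] [Inhabited α] (r x : List α) : List α :=
  (ExtPref (Reg r) x).take
    ((ExtPref (Reg r) x).length - 1 - (ExtPref (Reg r) x).reverse.idxOf (regA r))

/-- The unique `≤k`-root of `x` (when it is unique). -/
noncomputable def rootLE {α : Type*} (k : ℕ) (x : List α) : List α :=
  letI := Classical.propDecidable (∃ z, RootsLE k x = {z})
  if h : ∃ z, RootsLE k x = {z} then h.choose else x

/-- The sequence `x₁, x₂, …` with `x₁ = x` and `x_{j+1} = x_j ∖ *Pref(r_j, x_j)`
where `r_j` is the unique `≤3`-root of `x_j` (0-indexed: `seqX x j = x_{j+1}`). -/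
noncomputable def seqX {α : Type*} [DecidableEq α] [Inhabited α] (x : List α) : ℕ → List α
  | 0 => x
  | n + 1 => (seqX x n).drop (starPref (rootLE 3 (seqX x n)) (seqX x n)).length

/-- `r_{j+1}`, the unique `≤3`-root of `x_{j+1}` (0-indexed). -/
noncomputable def rj {α : Type*} [DecidableEq α] [Inhabited α] (x : List α) (j : ℕ) : List α :=
  rootLE 3 (seqX x j)

/-- `x` determines `m` regions: the roots `r₁, …, r_m` have at least three distinct
symbols and `r_{m+1}` does not. -/
def HasRegionsX {α : Type*} [DecidableEq α] [Inhabited α] (x : List α) (m : ℕ) : Prop :=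
  (∀ j < m, Has3 (rj x j)) ∧ ¬ Has3 (rj x m)

/-- `c_{j+1}` in the label of `x` (0-indexed):
`Count(main(r_{j+1}), R_{≤2}(p_{j+1}))` where `p_{j+1} = ExtPref(Reg(r_{j+1}), x_{j+1})`. -/
noncomputable def labelC {α : Type*} [DecidableEq α] [Inhabited α] (x : List α) (j : ℕ) : ℕ :=
  Count (mainSub (rj x j)) (rootLE 2 (ExtPref (Reg (rj x j)) (seqX x j)))

/-- `δ_{j+1} = +` in the label of `x` (0-indexed):
`Count(rot(main(r_{j+1})), p_{j+1}) > 0`. -/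
noncomputable def labelPlus {α : Type*} [DecidableEq α] [Inhabited α] (x : List α) (j : ℕ) : Prop :=
  0 < CountRot (mainSub (rj x j)) (ExtPref (Reg (rj x j)) (seqX x j))

/-- The sequence `ρ₁, ρ₂, …` defining the regions of `r`:
`ρ_{j+1}` is `ρ_j` with the prefix `w (abc)^ℓ` removed, where `Reg(ρ_j) = w (abc)^ℓ ab`. -/
def rho {α : Type*} [DecidableEq α] (r : List α) : ℕ → List α
  | 0 => r
  | n + 1 => (rho r n).drop ((Reg (rho r n)).length - 2)

/-- The `≤3`-irreducible word `r` has exactly `m` regions. -/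
def HasRegionsR {α : Type*} [DecidableEq α] (r : List α) (m : ℕ) : Prop :=
  (∀ j < m, Has3 (rho r j)) ∧ ¬ Has3 (rho r m)

/-- `C` is an `(n, ≤3; r)`-TD code: words of length `n` in `D*_{≤3}(r)`, pairwise
non-`≤3`-confusable. -/
def TDCode (n : ℕ) (r : List (Fin 3)) (C : Finset (List (Fin 3))) : Prop :=
  (∀ x ∈ C, x.length = n ∧ DerivLE 3 r x) ∧
    ∀ x ∈ C, ∀ y ∈ C, x ≠ y → ¬ Confusable 3 x y

/-- `T(n, r)`: the maximum size of an `(n, ≤3; r)`-TD code. -/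
noncomputable def Tnr (n : ℕ) (r : List (Fin 3)) : ℕ :=
  sSup {k | ∃ C : Finset (List (Fin 3)), TDCode n r C ∧ C.card = k}

/-- `C` is an `(n, ≤3; 3)`-TD code. -/
def TDCodeAll (n : ℕ) (C : Finset (List (Fin 3))) : Prop :=
  (∀ x ∈ C, x.length = n) ∧ ∀ x ∈ C, ∀ y ∈ C, x ≠ y → ¬ Confusable 3 x y

/-- `T(n)`: the maximum size of an `(n, ≤3; 3)`-TD code. -/
noncomputable def Tn (n : ℕ) : ℕ :=
  sSup {k | ∃ C : Finset (List (Fin 3)), TDCodeAll n C ∧ C.card = k}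

/-- `|Irr_{≤3}(i, 3)|`: the number of `≤3`-irreducible ternary words of length `i`. -/
noncomputable def IrrCount (i : ℕ) : ℕ :=
  Nat.card {x : List (Fin 3) // x.length = i ∧ IrredLE 3 x}

/-- The two codewords of Construction 2 built from the `≤3`-irreducible word
`r = r₁ r₂ ⋯ r_i` (with `i ≥ 4`). -/
def C2 (r : List (Fin 3)) : List (Fin 3) × List (Fin 3) :=
  let r1 := r.getD 0 0; let r2 := r.getD 1 0; let r3 := r.getD 2 0
  let r4 := r.getD 3 0; let r5 := r.getD 4 0
  if r1 ≠ r3 then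
    (r.take 3 ++ r, [r1, r2, r2, r3, r3, r4, r4] ++ r.drop 4)
  else if 5 ≤ r.length then
    ([r1, r2, r1, r4, r2, r1, r4] ++ r.drop 4,
      [r1, r2, r1, r1, r4, r4, r5, r5] ++ r.drop 5)
  else
    ([r1, r2, r1, r4, r2, r1, r4], [r1, r2, r1, r1, r4, r4, r4])

namespace Reorder

variable {γ : Type*}

lemma splitL {A B C D : List γ} (h : A ++ B = C ++ D) (hl : C.length ≤ A.length) :
    ∃ m : List γ, A = C ++ m ∧ D = m ++ B := by
  rcases List.append_eq_append_iff.mp h with ⟨m, hm1, hm2⟩ | ⟨m, hm1, hm2⟩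
  · have hm : m = [] := by
      have := congrArg List.length hm1
      simp at this
      exact List.eq_nil_of_length_eq_zero (by omega)
    subst hm
    exact ⟨[], by simpa using hm1.symm, by simpa using hm2.symm⟩
  · exact ⟨m, hm1, hm2⟩

lemma splitR {A B C D : List γ} (h : A ++ B = C ++ D) (hl : B.length ≤ D.length) :
    ∃ e : List γ, D = e ++ B ∧ A = C ++ e := by
  have hlen := congrArg List.length h
  simp at hlen
  obtain ⟨m, h1, h2⟩ := splitL h (by omega)
  exact ⟨m, h2, h1⟩

lemma len2 {l : List γ} (h : l.length = 2) : ∃ a b, l = [a, b] := by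
  match l, h with
  | [a, b], _ => exact ⟨a, b, rfl⟩

lemma dup_of {x y : List γ} (U V W : List γ) (hx : x = U ++ V ++ W)
    (hy : y = U ++ V ++ V ++ W) : DupAt U.length V.length x y :=
  ⟨U, V, W, hx, rfl, rfl, hy⟩

def GoalP (x x' : List γ) : Prop :=
  ∃ (t : ℕ) (ℓ j : ℕ → ℕ) (ws : ℕ → List γ),
      1 ≤ t ∧ ws 0 = x ∧ ws t = x' ∧
      (∀ s < t, DupAt (j s) (ℓ s) (ws s) (ws (s + 1))) ∧
      (∀ s < t, 1 ≤ ℓ s ∧ ℓ s ≤ 3) ∧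
      (∀ s s', s ≤ s' → s' < t → ℓ s' ≤ ℓ s)

lemma chain2 {x y z : List γ} {j1 l1 j2 l2 : ℕ}
    (h1 : DupAt j1 l1 x y) (h2 : DupAt j2 l2 y z)
    (b2 : 1 ≤ l2) (hle : l2 ≤ l1) (b1 : l1 ≤ 3) : GoalP x z := by
  refine ⟨2, fun s => if s = 0 then l1 else l2, fun s => if s = 0 then j1 else j2,
    fun s => if s = 0 then x else if s = 1 then y else z, by omega, rfl, rfl, ?_, ?_, ?_⟩
  · intro s hs
    interval_cases s
    · simpa using h1
    · simpa using h2
  · intro s hs; interval_cases s <;> simp <;> omega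
  · intro s s' hss hlt; interval_cases s' <;> interval_cases s <;> simp <;> omega

lemma chain3 {x y1 y2 z : List γ} {j1 l1 j2 l2 j3 l3 : ℕ}
    (h1 : DupAt j1 l1 x y1) (h2 : DupAt j2 l2 y1 y2) (h3 : DupAt j3 l3 y2 z)
    (b3 : 1 ≤ l3) (hle32 : l3 ≤ l2) (hle21 : l2 ≤ l1) (b1 : l1 ≤ 3) : GoalP x z := by
  refine ⟨3, fun s => if s = 0 then l1 else if s = 1 then l2 else l3,
    fun s => if s = 0 then j1 else if s = 1 then j2 else j3,
    fun s => if s = 0 then x else if s = 1 then y1 else if s = 2 then y2 else z,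
    by omega, rfl, rfl, ?_, ?_, ?_⟩
  · intro s hs
    interval_cases s
    · simpa using h1
    · simpa using h2
    · simpa using h3
  · intro s hs; interval_cases s <;> simp <;> omega
  · intro s s' hss hlt; interval_cases s' <;> interval_cases s <;> simp <;> omega

end Reorder

/-- Lemma 5: two tandem duplications of lengths `k₁ < k₂ ≤ 3` can be
replaced by a sequence of tandem duplications of nonincreasing lengths in `{1, 2, 3}`. -/
theorem reorder_duplications (q : ℕ) (hq : 2 ≤ q) (k₁ k₂ i₁ i₂ : ℕ)
    (hk₁ : 1 ≤ k₁) (h₁₂ : k₁ < k₂) (hk₂ : k₂ ≤ 3)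
    (x z x' : List (Fin q)) (h₁ : DupAt i₁ k₁ x z) (h₂ : DupAt i₂ k₂ z x') :
    ∃ (t : ℕ) (ℓ j : ℕ → ℕ) (ws : ℕ → List (Fin q)),
      1 ≤ t ∧ ws 0 = x ∧ ws t = x' ∧
      (∀ s < t, DupAt (j s) (ℓ s) (ws s) (ws (s + 1))) ∧
      (∀ s < t, 1 ≤ ℓ s ∧ ℓ s ≤ 3) ∧
      (∀ s s', s ≤ s' → s' < t → ℓ s' ≤ ℓ s) := by
  obtain ⟨u, v, w, hx, hu, hv, hz⟩ := h₁
  obtain ⟨p, q', r, hz2, hp, hq, hx'⟩ := h₂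
  have hzz : (u ++ v) ++ (v ++ w) = (p ++ q') ++ r := by
    have h := hz.symm.trans hz2
    simpa [List.append_assoc] using h
  show Reorder.GoalP x x'
  by_cases hA : i₂ + k₂ ≤ i₁ + k₁
  · -- the second block lies inside `u ++ v`
    obtain ⟨m, hm1, hm2⟩ := Reorder.splitL hzz (by simp [hu, hv, hp, hq]; omega)
    have h2 : u ++ v = p ++ (q' ++ m) := by rw [hm1]; simp [List.append_assoc]
    obtain ⟨e, he1, he2⟩ := Reorder.splitR h2 (by simp [hv, hq]; omega)
    have d1 : DupAt p.length q'.length x (p ++ q' ++ q' ++ (m ++ w)) :=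
      Reorder.dup_of p q' (m ++ w) (by rw [hx, hm1]; simp [List.append_assoc]) rfl
    have hy1 : p ++ q' ++ q' ++ (m ++ w) = (p ++ q' ++ e) ++ v ++ w := by
      calc p ++ q' ++ q' ++ (m ++ w) = p ++ q' ++ (q' ++ m) ++ w := by
            simp [List.append_assoc]
        _ = p ++ q' ++ (e ++ v) ++ w := by rw [he1]
        _ = (p ++ q' ++ e) ++ v ++ w := by simp [List.append_assoc]
    have d2 : DupAt (p ++ q' ++ e).length v.length (p ++ q' ++ q' ++ (m ++ w)) x' :=
      Reorder.dup_of (p ++ q' ++ e) v w hy1 (by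
        rw [hx', hm2]
        calc p ++ q' ++ q' ++ (m ++ (v ++ w))
            = p ++ q' ++ (q' ++ m) ++ (v ++ w) := by simp [List.append_assoc]
          _ = p ++ q' ++ (e ++ v) ++ (v ++ w) := by rw [he1]
          _ = (p ++ q' ++ e) ++ v ++ v ++ w := by simp [List.append_assoc])
    exact Reorder.chain2 d1 d2 (by omega) (by omega) (by omega)
  by_cases hB : i₁ + k₁ ≤ i₂
  · -- the second block lies inside the second copy of `v` followed by `w`
    have hzz2 : p ++ (q' ++ r) = (u ++ v) ++ (v ++ w) := by
      simpa [List.append_assoc] using hzz.symm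
    obtain ⟨m, hm1, hm2⟩ := Reorder.splitL hzz2 (by simp [hu, hv, hp]; omega)
    have h3 : (m ++ q') ++ r = v ++ w := by rw [hm2]; simp [List.append_assoc]
    obtain ⟨f, hf1, hf2⟩ := Reorder.splitL h3 (by simp [hv, hq]; omega)
    have d1 : DupAt (u ++ m).length q'.length x ((u ++ m) ++ q' ++ q' ++ r) :=
      Reorder.dup_of (u ++ m) q' r (by
        rw [hx]
        calc u ++ v ++ w = u ++ (v ++ w) := by simp [List.append_assoc]
          _ = u ++ (m ++ (q' ++ r)) := by rw [hm2]
          _ = (u ++ m) ++ q' ++ r := by simp [List.append_assoc]) rfl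
    have hy1 : (u ++ m) ++ q' ++ q' ++ r = u ++ v ++ (f ++ (q' ++ r)) := by
      calc (u ++ m) ++ q' ++ q' ++ r = u ++ (m ++ q') ++ (q' ++ r) := by
            simp [List.append_assoc]
        _ = u ++ (v ++ f) ++ (q' ++ r) := by rw [hf1]
        _ = u ++ v ++ (f ++ (q' ++ r)) := by simp [List.append_assoc]
    have d2 : DupAt u.length v.length ((u ++ m) ++ q' ++ q' ++ r) x' :=
      Reorder.dup_of u v (f ++ (q' ++ r)) hy1 (by
        rw [hx', hm1]
        calc (u ++ v) ++ m ++ q' ++ q' ++ r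
            = u ++ v ++ ((m ++ q') ++ (q' ++ r)) := by simp [List.append_assoc]
          _ = u ++ v ++ ((v ++ f) ++ (q' ++ r)) := by rw [hf1]
          _ = u ++ v ++ v ++ (f ++ (q' ++ r)) := by simp [List.append_assoc])
    exact Reorder.chain2 d1 d2 (by omega) (by omega) (by omega)
  · -- the second block straddles the boundary between the two copies of `v`
    have hC1 : i₁ + k₁ < i₂ + k₂ := by omega
    have hC2 : i₂ < i₁ + k₁ := by omega
    have hzz3 : (u ++ v) ++ (v ++ w) = p ++ (q' ++ r) := by
      simpa [List.append_assoc] using hzz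
    obtain ⟨al, hal1, hal2⟩ := Reorder.splitL hzz3 (by simp [hu, hv, hp]; omega)
    have hall : al.length = i₁ + k₁ - i₂ := by
      have := congrArg List.length hal1; simp [hu, hv, hp] at this; omega
    obtain ⟨be, hbe1, hbe2⟩ := Reorder.splitL hal2 (by omega)
    have hbel : be.length = k₂ - al.length := by
      have := congrArg List.length hbe1; simp [hq] at this; omega
    have hk1u : k₁ ≤ 2 := by omega
    interval_cases k₁ <;> interval_cases k₂
    · -- k₁ = 1, k₂ = 2, so |al| = 1
      have hs : al.length = 1 := by omega
      obtain ⟨g, hg1, hg2⟩ := Reorder.splitR hal1 (by omega)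
      have hg0 : g = [] := List.length_eq_zero_iff.mp (by
        have := congrArg List.length hg1; simp at this; omega)
      subst hg0
      obtain ⟨a, hva⟩ := List.length_eq_one_iff.mp hv
      subst hva
      obtain ⟨h', hh1, hh2⟩ := Reorder.splitL hbe2 (by omega)
      have hh0 : h' = [] := List.length_eq_zero_iff.mp (by
        have := congrArg List.length hh1; simp at this; omega)
      subst hh0
      have hbe : be = [a] := by simpa using hh1.symm
      subst hbe
      have hpu : p = u := by simpa using hg2.symm
      have d1 : DupAt u.length [a].length x (u ++ [a] ++ [a] ++ w) :=
        Reorder.dup_of u [a] w hx rfl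
      have d2 : DupAt u.length [a].length (u ++ [a] ++ [a] ++ w)
          (u ++ [a] ++ [a] ++ ([a] ++ w)) :=
        Reorder.dup_of u [a] ([a] ++ w) (by simp) rfl
      have d3 : DupAt u.length [a].length (u ++ [a] ++ [a] ++ ([a] ++ w))
          (u ++ [a] ++ [a] ++ ([a] ++ [a] ++ w)) :=
        Reorder.dup_of u [a] ([a] ++ [a] ++ w) (by simp) rfl
      have hfin : x' = u ++ [a] ++ [a] ++ ([a] ++ [a] ++ w) := by
        rw [hx', hbe1, hg1, hh2, hpu]; simp
      rw [hfin]
      exact Reorder.chain3 d1 d2 d3 (by simp) (by simp) (by simp) (by simp)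
    · -- k₁ = 1, k₂ = 3, so |al| ∈ {1, 2}
      obtain ⟨b', hvb⟩ := List.length_eq_one_iff.mp hv
      subst hvb
      rcases (by omega : al.length = 1 ∨ al.length = 2) with hs | hs
      · -- |al| = 1 : al = [a], |be| = 2
        obtain ⟨g, hg1, hg2⟩ := Reorder.splitR hal1 (by omega)
        have hg0 : g = [] := List.length_eq_zero_iff.mp (by
          have := congrArg List.length hg1; simp at this; omega)
        subst hg0
        have hpu : p = u := by simpa using hg2.symm
        obtain ⟨h', hh1, hh2⟩ := Reorder.splitL hbe2.symm (by omega)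
        -- hh1 : be = [b'] ++ h', hh2 : w = h' ++ r
        have hhl : h'.length = 1 := by
          have := congrArg List.length hh1; simp at this; omega
        obtain ⟨b, hb⟩ := List.length_eq_one_iff.mp hhl
        subst hb
        have d1 : DupAt u.length ([b'] ++ [b]).length x
            (u ++ ([b'] ++ [b]) ++ ([b'] ++ [b]) ++ r) :=
          Reorder.dup_of u ([b'] ++ [b]) r (by rw [hx, hh2]; simp) rfl
        have d2 : DupAt u.length [b'].length
            (u ++ ([b'] ++ [b]) ++ ([b'] ++ [b]) ++ r)
            (u ++ [b'] ++ [b'] ++ ([b, b', b] ++ r)) :=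
          Reorder.dup_of u [b'] ([b, b', b] ++ r) (by simp) rfl
        have d3 : DupAt (u ++ [b', b', b]).length [b'].length
            (u ++ [b'] ++ [b'] ++ ([b, b', b] ++ r))
            ((u ++ [b', b', b]) ++ [b'] ++ [b'] ++ ([b] ++ r)) :=
          Reorder.dup_of (u ++ [b', b', b]) [b'] ([b] ++ r) (by simp) rfl
        have hfin : x' = (u ++ [b', b', b]) ++ [b'] ++ [b'] ++ ([b] ++ r) := by
          rw [hx', hbe1, hh1, hg1, hpu]; simp
        rw [hfin]
        exact Reorder.chain3 d1 d2 d3 (by simp) (by simp) (by simp) (by simp)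
      · -- |al| = 2 : al = [c, b'], |be| = 1
        obtain ⟨g, hg1, hg2⟩ := Reorder.splitR hal1 (by omega)
        -- hg1 : al = g ++ [b'], hg2 : u = p ++ g
        have hgl : g.length = 1 := by
          have := congrArg List.length hg1; simp at this; omega
        obtain ⟨c, hc⟩ := List.length_eq_one_iff.mp hgl
        subst hc
        obtain ⟨h', hh1, hh2⟩ := Reorder.splitL hbe2 (by omega)
        have hh0 : h' = [] := List.length_eq_zero_iff.mp (by
          have := congrArg List.length hh1; simp at this; omega)
        subst hh0
        have hbe : be = [b'] := by simpa using hh1.symm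
        subst hbe
        have d1 : DupAt p.length ([c] ++ [b']).length x
            (p ++ ([c] ++ [b']) ++ ([c] ++ [b']) ++ w) :=
          Reorder.dup_of p ([c] ++ [b']) w (by rw [hx, hg2]; simp) rfl
        have d2 : DupAt (p ++ [c]).length [b'].length
            (p ++ ([c] ++ [b']) ++ ([c] ++ [b']) ++ w)
            ((p ++ [c]) ++ [b'] ++ [b'] ++ ([c, b'] ++ w)) :=
          Reorder.dup_of (p ++ [c]) [b'] ([c, b'] ++ w) (by simp) rfl
        have d3 : DupAt (p ++ [c, b', b', c]).length [b'].length
            ((p ++ [c]) ++ [b'] ++ [b'] ++ ([c, b'] ++ w))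
            ((p ++ [c, b', b', c]) ++ [b'] ++ [b'] ++ w) :=
          Reorder.dup_of (p ++ [c, b', b', c]) [b'] w (by simp) rfl
        have hfin : x' = (p ++ [c, b', b', c]) ++ [b'] ++ [b'] ++ w := by
          rw [hx', hbe1, hh2, hg1]; simp
        rw [hfin]
        exact Reorder.chain3 d1 d2 d3 (by simp) (by simp) (by simp) (by simp)
    · -- k₁ = 2, k₂ = 3, so |al| ∈ {1, 2}
      rcases (by omega : al.length = 1 ∨ al.length = 2) with hs | hs
      · -- |al| = 1 : v = [a, b], al = [b], |be| = 2
        obtain ⟨g, hg1, hg2⟩ := Reorder.splitR hal1.symm (by omega)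
        -- hg1 : v = g ++ al, hg2 : p = u ++ g
        have hgl : g.length = 1 := by
          have := congrArg List.length hg1; simp [hv] at this; omega
        obtain ⟨a, ha⟩ := List.length_eq_one_iff.mp hgl
        subst ha
        obtain ⟨b, hb⟩ := List.length_eq_one_iff.mp hs
        subst hb
        subst hg1
        obtain ⟨h', hh1, hh2⟩ := Reorder.splitL hbe2 (by omega)
        have hh0 : h' = [] := List.length_eq_zero_iff.mp (by
          have := congrArg List.length hh1; simp at this; omega)
        subst hh0
        have hbe : be = [a] ++ [b] := by simpa using hh1.symm
        subst hbe
        have d1 : DupAt u.length ([a] ++ [b]).length x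
            (u ++ ([a] ++ [b]) ++ ([a] ++ [b]) ++ w) :=
          Reorder.dup_of u ([a] ++ [b]) w hx rfl
        have d2 : DupAt (u ++ [a]).length [b, a].length
            (u ++ ([a] ++ [b]) ++ ([a] ++ [b]) ++ w)
            ((u ++ [a]) ++ [b, a] ++ [b, a] ++ ([b] ++ w)) :=
          Reorder.dup_of (u ++ [a]) [b, a] ([b] ++ w) (by simp) rfl
        have d3 : DupAt (u ++ [a, b, a]).length [b].length
            ((u ++ [a]) ++ [b, a] ++ [b, a] ++ ([b] ++ w))
            ((u ++ [a, b, a]) ++ [b] ++ [b] ++ ([a, b] ++ w)) :=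
          Reorder.dup_of (u ++ [a, b, a]) [b] ([a, b] ++ w) (by simp) rfl
        have hfin : x' = (u ++ [a, b, a]) ++ [b] ++ [b] ++ ([a, b] ++ w) := by
          rw [hx', hbe1, hh2, hg2]; simp
        rw [hfin]
        exact Reorder.chain3 d1 d2 d3 (by simp) (by simp) (by simp) (by simp)
      · -- |al| = 2 : al = v, |be| = 1
        obtain ⟨g, hg1, hg2⟩ := Reorder.splitR hal1.symm (by omega)
        have hg0 : g = [] := List.length_eq_zero_iff.mp (by
          have := congrArg List.length hg1; simp [hv] at this; omega)
        subst hg0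
        obtain ⟨h', hh1, hh2⟩ := Reorder.splitL hbe2 (by omega)
        have hva : v = al := by simpa using hg1
        rw [hva] at hx hh1
        -- hh1 : al = be ++ h', hh2 : r = h' ++ w
        have d1 : DupAt u.length al.length x (u ++ al ++ al ++ w) :=
          Reorder.dup_of u al w hx rfl
        have d2 : DupAt (u ++ al).length al.length (u ++ al ++ al ++ w)
            ((u ++ al) ++ al ++ al ++ w) :=
          Reorder.dup_of (u ++ al) al w (by simp) rfl
        have d3 : DupAt (u ++ al).length be.length ((u ++ al) ++ al ++ al ++ w)
            ((u ++ al) ++ be ++ be ++ (h' ++ (be ++ (h' ++ w)))) :=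
          Reorder.dup_of (u ++ al) be (h' ++ (be ++ (h' ++ w)))
            (by rw [hh1]; simp) rfl
        have hfin : x' = (u ++ al) ++ be ++ be ++ (h' ++ (be ++ (h' ++ w))) := by
          rw [hx', hbe1, hh2, hg2, hh1]; simp
        rw [hfin]
        exact Reorder.chain3 d1 d2 d3 (by omega) (by omega) (by omega) (by omega)
end

section
/- Let q ≥ 2, let k ∈ {2,3}, and let x = uvw be a word over Σ_q with |u| = i and |v| = k, so that T_{i,k}(x) = uvvw. If the symbols of v are not pairwise distinct, then there exist lengths ℓ₁, ℓ₂ with k > ℓ₁ ≥ ℓ₂ ≥ 1 and positions j₁, j₂ such that T_{j₂,ℓ₂}(T_{j₁,ℓ₁}(x)) = T_{i,k}(x). -/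
/-- Lemma 6: a tandem duplication of length `k ∈ {2,3}` whose duplicated
block does not have pairwise distinct symbols can be replaced by two tandem duplications of
strictly smaller (nonincreasing) lengths. -/
theorem nondistinct_duplication_shorter (q : ℕ) (hq : 2 ≤ q) (k : ℕ) (hk : k = 2 ∨ k = 3)
    (u v w : List (Fin q)) (hv : v.length = k) (hnd : ¬ v.Nodup) :
    ∃ (ℓ₁ ℓ₂ j₁ j₂ : ℕ) (z : List (Fin q)),
      1 ≤ ℓ₂ ∧ ℓ₂ ≤ ℓ₁ ∧ ℓ₁ < k ∧
      DupAt j₁ ℓ₁ (u ++ v ++ w) z ∧ DupAt j₂ ℓ₂ z (u ++ v ++ v ++ w) := by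
  subst hv
  rcases hk with hk | hk
  · obtain ⟨a, b, rfl⟩ := List.length_eq_two.mp hk
    have hab : a = b := by simpa using hnd
    subst hab
    exact ⟨1, 1, u.length, u.length, u ++ [a,a,a] ++ w, le_refl _, le_refl _, by norm_num,
      ⟨u, [a], [a]++w, by simp, rfl, rfl, by simp⟩,
      ⟨u, [a], [a,a]++w, by simp, rfl, rfl, by simp⟩⟩
  · obtain ⟨a, b, c, rfl⟩ := List.length_eq_three.mp hk
    have h : a = b ∨ a = c ∨ b = c := by
      by_contra h
      push_neg at h
      exact hnd (by simp [h.1, h.2.1, h.2.2])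
    by_cases hab : a = b
    · subst hab
      exact ⟨2, 1, u.length+1, u.length+3, u ++ [a,a,c,a,c] ++ w, le_refl _, by norm_num,
        by norm_num,
        ⟨u++[a], [a,c], w, by simp, by simp, rfl, by simp⟩,
        ⟨u++[a,a,c], [a], [c]++w, by simp, by simp, rfl, by simp⟩⟩
    by_cases hbc : b = c
    · subst hbc
      exact ⟨2, 1, u.length, u.length+1, u ++ [a,b,a,b,b] ++ w, le_refl _, by norm_num,
        by norm_num,
        ⟨u, [a,b], [b]++w, by simp, rfl, rfl, by simp⟩,
        ⟨u++[a], [b], [a,b,b]++w, by simp, by simp, rfl, by simp⟩⟩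
    · have hac : a = c := by tauto
      subst hac
      exact ⟨2, 1, u.length, u.length+2, u ++ [a,b,a,b,a] ++ w, le_refl _, by norm_num,
        by norm_num,
        ⟨u, [a,b], [a]++w, by simp, rfl, rfl, by simp⟩,
        ⟨u++[a,b], [a], [b,a]++w, by simp, by simp, rfl, by simp⟩⟩
end

section
/- Let q ≥ 2 and let x, y be words over Σ_q. Then x and y are ≤3-confusable if and only if there exist words x' and y' such that x ⇒*_{3_d} x', y ⇒*_{3_d} y', and R_{≤2}(x') = R_{≤2}(y'). -/
section TDProof
open Relation List

variable {α : Type*}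

private lemma not_nodup_shape (A B C : List α) (x : α) (hx : x ∈ C) :
    ¬ (A ++ (x :: B) ++ C).Nodup := by
  intro h
  rw [List.append_assoc, List.nodup_append] at h
  have h2 := h.2.1
  rw [List.nodup_append] at h2
  exact h2.2.2 x (List.mem_cons_self (a := x) (l := B)) x hx rfl

private lemma diamond_up_core (u1 v1 w1 m v2 w2 : List α)
    (h11 : 1 ≤ v1.length) (h12 : v1.length ≤ 2)
    (h21 : 1 ≤ v2.length) (h22 : v2.length ≤ 2)
    (heq : v1 ++ w1 = m ++ (v2 ++ w2)) :
    ∃ d, ReflGen (DupLE 2) (u1 ++ v1 ++ v1 ++ w1) d ∧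
         ReflGen (DupLE 2) ((u1 ++ m) ++ v2 ++ v2 ++ w2) d := by
  rcases List.append_eq_append_iff.mp heq with ⟨t, hm, hw⟩ | ⟨t, hv, hw⟩
  · -- m = v1 ++ t, w1 = t ++ (v2 ++ w2) : disjoint case
    subst hm; subst hw
    refine ⟨u1 ++ v1 ++ v1 ++ t ++ v2 ++ v2 ++ w2, ReflGen.single ?_, ReflGen.single ?_⟩
    · exact ⟨u1 ++ v1 ++ v1 ++ t, v2, w2, by simp, h21, h22, by simp⟩
    · exact ⟨u1, v1, t ++ v2 ++ v2 ++ w2, by simp, h11, h12, by simp⟩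
  · -- v1 = m ++ t, v2 ++ w2 = t ++ w1
    subst hv
    rcases List.append_eq_append_iff.mp hw with ⟨r, ht, hw2⟩ | ⟨r, hv2, hw1⟩
    · -- t = v2 ++ r, w2 = r ++ w1 : v2 inside v1
      subst ht; subst hw2
      have hlen : m.length + (v2.length + r.length) ≤ 2 := by
        simpa using h12
      have hmr : m = [] ∨ r = [] := by
        rcases Nat.eq_zero_or_pos m.length with h | h
        · exact Or.inl (List.length_eq_zero_iff.mp h)
        · right
          exact List.length_eq_zero_iff.mp (by omega)
      rcases hmr with rfl | rfl
      · -- m = [] : v1 = v2 ++ r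
        refine ⟨u1 ++ v2 ++ v2 ++ r ++ v2 ++ r ++ w1, ReflGen.single ?_, ReflGen.single ?_⟩
        · exact ⟨u1, v2, r ++ v2 ++ r ++ w1, by simp, h21, h22, by simp⟩
        · exact ⟨u1 ++ v2, v2 ++ r, w1, by simp, by simpa using h11, by simpa using h12,
            by simp⟩
      · -- r = [] : v1 = m ++ v2
        refine ⟨u1 ++ m ++ v2 ++ m ++ v2 ++ v2 ++ w1, ReflGen.single ?_, ReflGen.single ?_⟩
        · exact ⟨u1 ++ m ++ v2 ++ m, v2, w1, by simp, h21, h22, by simp⟩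
        · exact ⟨u1, m ++ v2, v2 ++ w1, by simp, by simpa using h11, by simpa using h12,
            by simp⟩
    · -- v2 = t ++ r, w1 = r ++ w2 : overlap
      subst hv2; subst hw1
      refine ⟨u1 ++ m ++ t ++ m ++ t ++ r ++ t ++ r ++ w2, ReflGen.single ?_, ReflGen.single ?_⟩
      · exact ⟨u1 ++ m ++ t ++ m, t ++ r, w2, by simp, h21, h22, by simp⟩
      · exact ⟨u1, m ++ t, r ++ t ++ r ++ w2, by simp, h11, h12, by simp⟩

private lemma diamond_up (a b c : List α) (hab : DupLE 2 a b) (hac : DupLE 2 a c) :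
    ∃ d, ReflGen (DupLE 2) b d ∧ ReflTransGen (DupLE 2) c d := by
  obtain ⟨u1, v1, w1, ha1, h11, h12, hb⟩ := hab
  obtain ⟨u2, v2, w2, ha2, h21, h22, hc⟩ := hac
  subst hb; subst hc
  rw [ha1] at ha2
  have ha2' : u1 ++ (v1 ++ w1) = u2 ++ (v2 ++ w2) := by simpa [List.append_assoc] using ha2
  rcases List.append_eq_append_iff.mp ha2' with ⟨m, hu, he⟩ | ⟨m, hu, he⟩
  · subst hu
    obtain ⟨d, hd1, hd2⟩ := diamond_up_core u1 v1 w1 m v2 w2 h11 h12 h21 h22 he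
    exact ⟨d, by simpa [List.append_assoc] using hd1,
      (by simpa [List.append_assoc] using hd2 : ReflGen (DupLE 2) _ _).to_reflTransGen⟩
  · subst hu
    obtain ⟨d, hd1, hd2⟩ := diamond_up_core u2 v2 w2 m v1 w1 h21 h22 h11 h12 he
    exact ⟨d, by simpa [List.append_assoc] using hd2,
      (by simpa [List.append_assoc] using hd1 : ReflGen (DupLE 2) _ _).to_reflTransGen⟩

private lemma join_up {a b c : List α} (hb : DerivLE 2 a b) (hc : DerivLE 2 a c) :
    ∃ d, DerivLE 2 b d ∧ DerivLE 2 c d :=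
  Relation.church_rosser (fun a b c h1 h2 => diamond_up a b c h1 h2) hb hc

end TDProof
section TDProof2
open Relation List

variable {α : Type*}

/-- Square-removal: `Red a b` iff `a` is obtained from `b` by removing a square of length ≤ 2. -/
private def Red : List α → List α → Prop := fun a b : List α => DupLE 2 b a

private lemma diamond_down_core (v1 s1 m v2 s2 : List α)
    (h11 : 1 ≤ v1.length) (h12 : v1.length ≤ 2)
    (h21 : 1 ≤ v2.length) (h22 : v2.length ≤ 2)
    (heq : (v1 ++ v1) ++ s1 = m ++ (v2 ++ v2 ++ s2)) :
    ∃ d, ReflGen (Red (α := α)) (v1 ++ s1) d ∧ ReflGen (Red (α := α)) (m ++ v2 ++ s2) d := by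
  rcases List.append_eq_append_iff.mp heq with ⟨t, hm, hs⟩ | ⟨t, hv, hs⟩
  · -- disjoint: m = v1 ++ v1 ++ t, s1 = t ++ (v2 ++ v2 ++ s2)
    subst hm; subst hs
    refine ⟨v1 ++ t ++ v2 ++ s2, ReflGen.single ?_, ReflGen.single ?_⟩
    · exact ⟨v1 ++ t, v2, s2, by simp, h21, h22, by simp⟩
    · exact ⟨[], v1, t ++ v2 ++ s2, by simp, h11, h12, by simp⟩
  · rcases v1 with _ | ⟨x, _ | ⟨y, _ | ⟨z, v1t⟩⟩⟩
    · simp at h11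
    · -- v1 = [x]
      rcases m with _ | ⟨a1, _ | ⟨a2, _ | ⟨a3, mt⟩⟩⟩
      · -- m = []
        simp at hv; subst hv
        rcases v2 with _ | ⟨c, _ | ⟨e, _ | ⟨f, v2t⟩⟩⟩
        · simp at h21
        · simp at hs
          obtain ⟨h1, rfl⟩ := hs; subst h1
          exact ⟨[c] ++ s2, ReflGen.refl, ReflGen.refl⟩
        · simp at hs
          obtain ⟨h1, h2, rfl⟩ := hs; subst h1; subst h2
          exact ⟨e :: e :: s2,
            ReflGen.single ⟨[], [e], e :: s2, by simp, by simp, by simp, by simp⟩,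
            ReflGen.refl⟩
        · simp at h22
      · -- m = [a1] (= [x])
        simp at hv
        obtain ⟨rfl, rfl⟩ := hv
        rcases v2 with _ | ⟨c, _ | ⟨e, _ | ⟨f, v2t⟩⟩⟩
        · simp at h21
        · simp at hs
          obtain ⟨h1, rfl⟩ := hs; subst h1
          exact ⟨c :: c :: s2, ReflGen.refl, ReflGen.refl⟩
        · simp at hs
          obtain ⟨h1, rfl⟩ := hs; subst h1
          refine ⟨c :: e :: s2, ReflGen.single ?_, ReflGen.single ?_⟩
          · exact ⟨[], [c, e], s2, by simp, by simp, by simp, by simp⟩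
          · exact ⟨[], [c], e :: s2, by simp, by simp, by simp, by simp⟩
        · simp at h22
      · -- m = [a1, a2] (= [x,x])
        simp at hv
        obtain ⟨rfl, rfl, rfl⟩ := hv
        rcases v2 with _ | ⟨c, _ | ⟨e, _ | ⟨f, v2t⟩⟩⟩
        · simp at h21
        · simp at hs
          obtain rfl := hs
          refine ⟨x :: c :: s2, ReflGen.single ?_, ReflGen.single ?_⟩
          · exact ⟨[x], [c], s2, by simp, by simp, by simp, by simp⟩
          · exact ⟨[], [x], c :: s2, by simp, by simp, by simp, by simp⟩
        · simp at hs
          obtain rfl := hs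
          refine ⟨x :: c :: e :: s2, ReflGen.single ?_, ReflGen.single ?_⟩
          · exact ⟨[x], [c, e], s2, by simp, by simp, by simp, by simp⟩
          · exact ⟨[], [x], c :: e :: s2, by simp, by simp, by simp, by simp⟩
        · simp at h22
      · -- m too long
        exfalso; have := congrArg List.length hv; simp at this
    · -- v1 = [x, y]
      rcases m with _ | ⟨a1, _ | ⟨a2, _ | ⟨a3, _ | ⟨a4, _ | ⟨a5, mt⟩⟩⟩⟩⟩
      · -- m = []
        simp at hv; subst hv
        rcases v2 with _ | ⟨c, _ | ⟨e, _ | ⟨f, v2t⟩⟩⟩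
        · simp at h21
        · simp at hs
          obtain ⟨h1, h2, rfl⟩ := hs; subst h1; subst h2
          refine ⟨c :: c :: s1, ReflGen.refl, ReflGen.single ?_⟩
          exact ⟨[], [c], c :: s1, by simp, by simp, by simp, by simp⟩
        · simp at hs
          obtain ⟨h1, h2, -, -, rfl⟩ := hs; subst h1; subst h2
          exact ⟨c :: e :: s2, ReflGen.refl, ReflGen.refl⟩
        · simp at h22
      · -- m = [a1] (= [x])
        simp at hv
        obtain ⟨rfl, rfl⟩ := hv
        rcases v2 with _ | ⟨c, _ | ⟨e, _ | ⟨f, v2t⟩⟩⟩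
        · simp at h21
        · simp at hs
          obtain ⟨h1, h2, rfl⟩ := hs; subst h1; subst h2
          refine ⟨c :: c :: s1, ReflGen.refl, ReflGen.single ?_⟩
          exact ⟨[], [c], c :: s1, by simp, by simp, by simp, by simp⟩
        · simp at hs
          obtain ⟨h1, h2, -, rfl⟩ := hs; subst h1; subst h2
          exact ⟨e :: c :: e :: s2, ReflGen.refl, ReflGen.refl⟩
        · simp at h22
      · -- m = [a1, a2] (= [x,y])
        simp at hv
        obtain ⟨rfl, rfl, rfl⟩ := hv
        rcases v2 with _ | ⟨c, _ | ⟨e, _ | ⟨f, v2t⟩⟩⟩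
        · simp at h21
        · simp at hs
          obtain ⟨h1, h2, rfl⟩ := hs; subst h1; subst h2
          refine ⟨c :: c :: s2, ReflGen.refl, ReflGen.single ?_⟩
          exact ⟨[], [c], c :: s2, by simp, by simp, by simp, by simp⟩
        · simp at hs
          obtain ⟨h1, h2, rfl⟩ := hs; subst h1; subst h2
          exact ⟨c :: e :: c :: e :: s2, ReflGen.refl, ReflGen.refl⟩
        · simp at h22
      · -- m = [a1, a2, a3] (= [x,y,x])
        simp at hv
        obtain ⟨rfl, rfl, rfl, rfl⟩ := hv
        rcases v2 with _ | ⟨c, _ | ⟨e, _ | ⟨f, v2t⟩⟩⟩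
        · simp at h21
        · simp at hs
          obtain ⟨h1, rfl⟩ := hs; subst h1
          refine ⟨x :: c :: s2, ReflGen.single ?_, ReflGen.single ?_⟩
          · exact ⟨[x], [c], s2, by simp, by simp, by simp, by simp⟩
          · exact ⟨[], [x, c], s2, by simp, by simp, by simp, by simp⟩
        · simp at hs
          obtain ⟨h1, rfl⟩ := hs; subst h1
          refine ⟨x :: c :: e :: s2, ReflGen.single ?_, ReflGen.single ?_⟩
          · exact ⟨[x], [c, e], s2, by simp, by simp, by simp, by simp⟩
          · exact ⟨[], [x, c], e :: s2, by simp, by simp, by simp, by simp⟩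
        · simp at h22
      · -- m = [a1, a2, a3, a4] (= [x,y,x,y])
        simp at hv
        obtain ⟨rfl, rfl, rfl, rfl, rfl⟩ := hv
        rcases v2 with _ | ⟨c, _ | ⟨e, _ | ⟨f, v2t⟩⟩⟩
        · simp at h21
        · simp at hs
          obtain rfl := hs
          refine ⟨x :: y :: c :: s2, ReflGen.single ?_, ReflGen.single ?_⟩
          · exact ⟨[x, y], [c], s2, by simp, by simp, by simp, by simp⟩
          · exact ⟨[], [x, y], c :: s2, by simp, by simp, by simp, by simp⟩
        · simp at hs
          obtain rfl := hs
          refine ⟨x :: y :: c :: e :: s2, ReflGen.single ?_, ReflGen.single ?_⟩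
          · exact ⟨[x, y], [c, e], s2, by simp, by simp, by simp, by simp⟩
          · exact ⟨[], [x, y], c :: e :: s2, by simp, by simp, by simp, by simp⟩
        · simp at h22
      · -- m too long
        exfalso; have := congrArg List.length hv; simp at this
    · simp at h12

end TDProof2
section TDProof3
open Relation List

variable {α : Type*}

private lemma dupLE_prepend {k : ℕ} (p : List α) {x y : List α} (h : DupLE k x y) :
    DupLE k (p ++ x) (p ++ y) := by
  obtain ⟨u, v, w, hx, h1, h2, hy⟩ := h
  exact ⟨p ++ u, v, w, by simp [hx], h1, h2, by simp [hy]⟩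

private lemma reflGen_red_prepend (p : List α) {x y : List α}
    (h : ReflGen (Red (α := α)) x y) : ReflGen (Red (α := α)) (p ++ x) (p ++ y) := by
  cases h with
  | refl => exact ReflGen.refl
  | single h => exact ReflGen.single (dupLE_prepend p h)

private lemma diamond_down (a b c : List α) (hab : Red a b) (hac : Red a c) :
    ∃ d, ReflGen (Red (α := α)) b d ∧ ReflTransGen (Red (α := α)) c d := by
  obtain ⟨p1, v1, s1, hu1, h11, h12, hw1⟩ := hab
  obtain ⟨p2, v2, s2, hu2, h21, h22, hw2⟩ := hac
  subst hu1; subst hu2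
  rw [hw1] at hw2
  have hw2' : p1 ++ ((v1 ++ v1) ++ s1) = p2 ++ ((v2 ++ v2) ++ s2) := by
    simpa [List.append_assoc] using hw2
  rcases List.append_eq_append_iff.mp hw2' with ⟨m, hp, he⟩ | ⟨m, hp, he⟩
  · subst hp
    obtain ⟨d, hd1, hd2⟩ := diamond_down_core v1 s1 m v2 s2 h11 h12 h21 h22
      (by simpa [List.append_assoc] using he)
    refine ⟨p1 ++ d, ?_, ReflGen.to_reflTransGen ?_⟩
    · simpa [List.append_assoc] using reflGen_red_prepend p1 hd1
    · simpa [List.append_assoc] using reflGen_red_prepend p1 hd2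
  · subst hp
    obtain ⟨d, hd1, hd2⟩ := diamond_down_core v2 s2 m v1 s1 h21 h22 h11 h12
      (by simpa [List.append_assoc] using he)
    refine ⟨p2 ++ d, ?_, ReflGen.to_reflTransGen ?_⟩
    · simpa [List.append_assoc] using reflGen_red_prepend p2 hd2
    · simpa [List.append_assoc] using reflGen_red_prepend p2 hd1

private lemma red_of_deriv {a b : List α} (h : DerivLE 2 a b) :
    ReflTransGen (Red (α := α)) b a := by
  induction h with
  | refl => exact ReflTransGen.refl
  | tail _ hstep ih => exact ReflTransGen.head hstep ih

private lemma irred_eq_of_red {r d : List α} (hr : IrredLE 2 r)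
    (h : ReflTransGen (Red (α := α)) r d) : r = d := by
  rcases h.cases_head with rfl | ⟨c, hc, -⟩
  · rfl
  · obtain ⟨u, v, w, _, l1, l2, he⟩ := hc
    exact absurd ⟨u, v, w, l1, l2, he⟩ hr

private lemma root_unique {x r1 r2 : List α} (h1 : IrredLE 2 r1) (h2 : IrredLE 2 r2)
    (d1 : DerivLE 2 r1 x) (d2 : DerivLE 2 r2 x) : r1 = r2 := by
  obtain ⟨d, hd1, hd2⟩ := Relation.church_rosser (r := Red (α := α))
    (fun a b c hab hac => diamond_down a b c hab hac) (red_of_deriv d1) (red_of_deriv d2)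
  rw [irred_eq_of_red h1 hd1, irred_eq_of_red h2 hd2]

private lemma root_exists_aux : ∀ (n : ℕ) (x : List α), x.length ≤ n →
    ∃ r, IrredLE 2 r ∧ DerivLE 2 r x := by
  intro n
  induction n with
  | zero =>
    intro x hx
    refine ⟨x, ?_, ReflTransGen.refl⟩
    rintro ⟨u, v, w, l1, l2, he⟩
    rw [he] at hx
    have : (u ++ v ++ v ++ w).length = u.length + (v.length + (v.length + w.length)) := by simp
    omega
  | succ n ih =>
    intro x hx
    by_cases h : IrredLE 2 x
    · exact ⟨x, h, ReflTransGen.refl⟩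
    · obtain ⟨u, v, w, l1, l2, he⟩ := not_not.mp h
      have hlen : (u ++ v ++ w).length ≤ n := by
        rw [he] at hx
        simp at hx ⊢
        omega
      obtain ⟨r, hr, hd⟩ := ih (u ++ v ++ w) hlen
      exact ⟨r, hr, hd.tail ⟨u, v, w, rfl, l1, l2, he⟩⟩

private lemma root_exists (x : List α) : ∃ r, IrredLE 2 r ∧ DerivLE 2 r x :=
  root_exists_aux x.length x le_rfl

private lemma rootsLE_eq_of_deriv {a b : List α} (h : DerivLE 2 a b) :
    RootsLE 2 a = RootsLE 2 b := by
  ext r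
  constructor
  · rintro ⟨hr, hd⟩
    exact ⟨hr, hd.trans h⟩
  · rintro ⟨hr, hd⟩
    obtain ⟨r', hr', hd'⟩ := root_exists a
    have : r = r' := root_unique hr hr' hd (hd'.trans h)
    exact this ▸ ⟨hr', hd'⟩

end TDProof3
section TDProof4
open Relation List

variable {α : Type*}

/-- Any `≤3` duplication step is a distinct-triple duplication or a `≤2`-derivation. -/
private lemma dupLE3_cases {a b : List α} (h : DupLE 3 a b) :
    DupD 3 a b ∨ DerivLE 2 a b := by
  obtain ⟨u, v, w, ha, l1, l2, hb⟩ := h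
  by_cases hlen : v.length ≤ 2
  · exact Or.inr (ReflTransGen.single ⟨u, v, w, ha, l1, hlen, hb⟩)
  · have h3 : v.length = 3 := by omega
    by_cases hnd : v.Nodup
    · exact Or.inl ⟨u, v, w, ha, h3, hnd, hb⟩
    · right
      subst ha; subst hb
      rcases v with _ | ⟨p, _ | ⟨q, _ | ⟨r, _ | ⟨s, t⟩⟩⟩⟩ <;> simp at h3
      have hpq : p = q ∨ p = r ∨ q = r := by
        by_contra hc
        push_neg at hc
        exact hnd (by simp [hc.1, hc.2.1, hc.2.2])
      rcases hpq with rfl | rfl | rfl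
      · -- v = [p, p, r]
        refine ReflTransGen.head (b := u ++ [p, p, r, p, r] ++ w) ?_ (ReflTransGen.single ?_)
        · exact ⟨u ++ [p], [p, r], w, by simp, by simp, by simp, by simp⟩
        · exact ⟨u ++ [p, p, r], [p], [r] ++ w, by simp, by simp, by simp, by simp⟩
      · -- v = [p, q, p]
        refine ReflTransGen.head (b := u ++ [p, q, p, q, p] ++ w) ?_ (ReflTransGen.single ?_)
        · exact ⟨u, [p, q], [p] ++ w, by simp, by simp, by simp, by simp⟩
        · exact ⟨u ++ [p, q], [p], [q, p] ++ w, by simp, by simp, by simp, by simp⟩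
      · -- v = [p, q, q]
        refine ReflTransGen.head (b := u ++ [p, q, p, q, q] ++ w) ?_ (ReflTransGen.single ?_)
        · exact ⟨u, [p, q], [q] ++ w, by simp, by simp, by simp, by simp⟩
        · exact ⟨u ++ [p], [q], [p, q, q] ++ w, by simp, by simp, by simp, by simp⟩

private lemma mem_head_overlap {V m t2 g e' : List α} {x0 : α}
    (h1 : V = m ++ (x0 :: e')) (h2 : V = t2 ++ g) (hV : V.length ≤ 2)
    (hlen : (x0 :: e').length + t2.length = 3) : x0 ∈ t2 := by
  rcases e' with _ | ⟨y0, e2⟩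
  · -- e = [x0], t2.length = 2, so V = t2 and x0 is the last entry of V
    have ht2 : t2.length = 2 := by simp at hlen; omega
    have h2l := congrArg List.length h2
    simp [ht2] at h2l
    have hg : g = [] := List.length_eq_zero_iff.mp (by omega)
    subst hg
    have hVt2 : V = t2 := by simpa using h2
    rw [← hVt2, h1]
    simp
  · -- e = x0 :: y0 :: e2 : forces e2 = [], m = [], V = [x0,y0], t2 = [x0]
    have h1l := congrArg List.length h1
    have h2l := congrArg List.length h2
    simp at h1l h2l hlen
    have he2 : e2 = [] := List.length_eq_zero_iff.mp (by omega)
    subst he2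
    have hm : m = [] := List.length_eq_zero_iff.mp (by omega)
    subst hm
    simp at h1
    rcases t2 with _ | ⟨t0, t2'⟩
    · omega
    · rw [h1] at h2
      simp at h2
      simp [h2.1]

/-- Commutation: a distinct-triple duplication after a `≤2`-duplication can be pulled in front. -/
private lemma commute_step {a b c : List α} (h1 : DupLE 2 a b) (h2 : DupD 3 b c) :
    ∃ d, DupD 3 a d ∧ DupLE 2 d c := by
  obtain ⟨P, V, S, ha, hV1, hV2, hb⟩ := h1
  obtain ⟨Q, T, W, hb2, hT3, hTn, hc⟩ := h2
  subst ha; subst hc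
  rw [hb] at hb2
  have key : P ++ (V ++ (V ++ S)) = Q ++ (T ++ W) := by simpa [List.append_assoc] using hb2
  rcases List.append_eq_append_iff.mp key with ⟨m, hQ, he⟩ | ⟨m, hP, he⟩
  · -- Q = P ++ m, V ++ (V ++ S) = m ++ (T ++ W)
    subst hQ
    rcases List.append_eq_append_iff.mp he with ⟨m2, hm, he2⟩ | ⟨e, hV', he2⟩
    · -- m = V ++ m2, V ++ S = m2 ++ (T ++ W)
      subst hm
      rcases List.append_eq_append_iff.mp he2 with ⟨m3, hm2, he3⟩ | ⟨e, hV', he3⟩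
      · -- m2 = V ++ m3, S = m3 ++ (T ++ W) : T inside S
        subst hm2; subst he3
        refine ⟨P ++ V ++ m3 ++ T ++ T ++ W, ⟨P ++ V ++ m3, T, W, by simp, hT3, hTn, by simp⟩,
          ⟨P, V, m3 ++ T ++ T ++ W, by simp, hV1, hV2, by simp⟩⟩
      · -- V = m2 ++ e, T ++ W = e ++ S
        subst hV'
        rcases List.append_eq_append_iff.mp he3 with ⟨e2, hee, hW⟩ | ⟨t2, hT, hS⟩
        · -- e = T ++ e2 : length contradiction
          exfalso
          have hl := congrArg List.length hee
          simp [List.length_append, hT3] at hl hV2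
          omega
        · -- T = e ++ t2, S = t2 ++ W
          subst hT; subst hS
          refine ⟨P ++ m2 ++ (e ++ t2) ++ (e ++ t2) ++ W,
            ⟨P ++ m2, e ++ t2, W, by simp, hT3, hTn, by simp⟩,
            ⟨P, m2 ++ e, t2 ++ (e ++ t2) ++ W, by simp, hV1, hV2, by simp⟩⟩
    · -- V = m ++ e, T ++ W = e ++ (V ++ S)
      rcases List.append_eq_append_iff.mp he2 with ⟨e2, hee, hW⟩ | ⟨t2, hT, hS⟩
      · -- e = T ++ e2 : length contradiction
        exfalso
        have hl := congrArg List.length hee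
        have hlV := congrArg List.length hV'
        simp [List.length_append, hT3] at hl hlV
        omega
      · -- T = e ++ t2, V ++ S = t2 ++ W
        rcases List.append_eq_append_iff.mp hS with ⟨g, ht2, hS'⟩ | ⟨g, hVg, hW'⟩
        · -- t2 = V ++ g, S = g ++ W
          subst ht2; subst hS'
          rcases e with _ | ⟨x0, e'⟩
          · -- e = [] : V = m, T = V ++ g
            have hm : V = m := by simpa using hV'
            subst hm
            have hT' : T = V ++ g := by simpa using hT
            subst hT'
            refine ⟨P ++ (V ++ g) ++ (V ++ g) ++ W,
              ⟨P, V ++ g, W, by simp, hT3, hTn, by simp⟩,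
              ⟨P, V, g ++ (V ++ g) ++ W, by simp, hV1, hV2, by simp⟩⟩
          · -- e = x0 :: e' : Nodup contradiction
            exfalso
            have hx : x0 ∈ V ++ g := List.mem_append_left _ (by simp [hV'])
            have := not_nodup_shape [] e' (V ++ g) x0 hx
            rw [hT] at hTn
            exact this (by simpa using hTn)
        · -- V = t2 ++ g, W = g ++ S
          rcases e with _ | ⟨x0, e'⟩
          · -- e = [] : length contradiction
            exfalso
            have hl := congrArg List.length hT
            have hlg := congrArg List.length hVg
            simp [hT3] at hl hlg
            omega
          · -- Nodup contradiction via mem_head_overlap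
            exfalso
            have hlen : (x0 :: e').length + t2.length = 3 := by
              have hl := congrArg List.length hT
              simp [hT3, List.length_append] at hl ⊢
              omega
            have hx : x0 ∈ t2 := mem_head_overlap hV' hVg hV2 hlen
            have := not_nodup_shape [] e' t2 x0 hx
            rw [hT] at hTn
            exact this (by simpa using hTn)
  · -- P = Q ++ m, T ++ W = m ++ (V ++ (V ++ S))
    subst hP
    rcases List.append_eq_append_iff.mp he with ⟨m', hm, hW⟩ | ⟨t2, hT, hVS⟩
    · -- m = T ++ m', W = m' ++ (V ++ (V ++ S)) : T inside the prefix
      subst hm; subst hW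
      refine ⟨Q ++ T ++ T ++ m' ++ V ++ S,
        ⟨Q, T, m' ++ V ++ S, by simp, hT3, hTn, by simp⟩,
        ⟨Q ++ T ++ T ++ m', V, S, by simp, hV1, hV2, by simp⟩⟩
    · -- T = m ++ t2, V ++ (V ++ S) = t2 ++ W
      rcases List.append_eq_append_iff.mp hVS with ⟨g, ht2, hVS'⟩ | ⟨g, hVg, hW'⟩
      · -- t2 = V ++ g, V ++ S = g ++ W
        subst ht2
        rcases g with _ | ⟨g0, g'⟩
        · -- g = [] : t2 = V, W = V ++ S
          have hW : W = V ++ S := by simpa using hVS'.symm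
          subst hW; subst hT
          refine ⟨Q ++ (m ++ V) ++ (m ++ V) ++ S,
            ⟨Q, m ++ V, S, by simp, by simpa using hT3, by simpa using hTn, by simp⟩,
            ⟨Q ++ (m ++ V) ++ m, V, S, by simp, hV1, hV2, by simp⟩⟩
        · -- g = g0 :: g' : Nodup contradiction
          exfalso
          rcases V with _ | ⟨v0, V'⟩
          · simp at hV1
          · have hg0 : v0 = g0 := by
              have := hVS'
              simp at this
              exact this.1
            subst hg0
            have := not_nodup_shape m V' (v0 :: g') v0 (List.mem_cons_self (a := v0) (l := g'))
            rw [hT] at hTn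
            exact this (by simpa using hTn)
      · -- V = t2 ++ g, W = g ++ (V ++ S) : uniform case
        subst hW'
        refine ⟨Q ++ T ++ T ++ g ++ S,
          ⟨Q, T, g ++ S, ?_, hT3, hTn, by simp⟩,
          ⟨Q ++ T ++ m, V, S, ?_, hV1, hV2, ?_⟩⟩
        · -- a = (Q ++ m) ++ V ++ S = Q ++ T ++ (g ++ S)
          rw [hT, hVg]; simp
        · rw [hT, hVg]; simp
        · rw [hT, hVg]; simp

end TDProof4
section TDProof5
open Relation List

variable {α : Type*}

private lemma pull_commute {a b : List α} (h1 : DerivLE 2 a b) :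
    ∀ {c : List α}, DupD 3 b c → ∃ d, DupD 3 a d ∧ DerivLE 2 d c := by
  induction h1 with
  | refl => exact fun h2 => ⟨_, h2, ReflTransGen.refl⟩
  | tail hab hstep ih =>
    intro c h2
    obtain ⟨d', hd1, hd2⟩ := commute_step hstep h2
    obtain ⟨d, hda, hdd⟩ := ih hd1
    exact ⟨d, hda, hdd.trans (ReflTransGen.single hd2)⟩

private lemma decompose {x z : List α} (h : DerivLE 3 x z) :
    ∃ x', DerivD 3 x x' ∧ DerivLE 2 x' z := by
  induction h with
  | refl => exact ⟨x, ReflTransGen.refl, ReflTransGen.refl⟩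
  | tail hxz hstep ih =>
    obtain ⟨x', hd, hle⟩ := ih
    rcases dupLE3_cases hstep with h3 | h2
    · obtain ⟨x'', hx'', hle'⟩ := pull_commute hle h3
      exact ⟨x'', hd.tail hx'', hle'⟩
    · exact ⟨x', hd, hle.trans h2⟩

private lemma derivD_to_derivLE3 {a b : List α} (h : DerivD 3 a b) : DerivLE 3 a b :=
  Relation.ReflTransGen.mono (r := DupD 3) (p := DupLE 3)
    (fun _ _ ⟨u, v, w, hx, h3, _, hy⟩ => ⟨u, v, w, hx, by omega, by omega, hy⟩) _ _ h

private lemma derivLE2_to_3 {a b : List α} (h : DerivLE 2 a b) : DerivLE 3 a b :=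
  Relation.ReflTransGen.mono (r := DupLE 2) (p := DupLE 3)
    (fun _ _ ⟨u, v, w, hx, hl1, hl2, hy⟩ => ⟨u, v, w, hx, hl1, by omega, hy⟩) _ _ h

end TDProof5

/-- Theorem 8: `x` and `y` are `≤3`-confusable iff there are
`x ⇒*_{3_d} x'` and `y ⇒*_{3_d} y'` with `R_{≤2}(x') = R_{≤2}(y')`. -/
theorem confusable_iff_distinct_triples (q : ℕ) (hq : 2 ≤ q) (x y : List (Fin q)) :
    Confusable 3 x y ↔
      ∃ x' y' : List (Fin q),
        DerivD 3 x x' ∧ DerivD 3 y y' ∧ RootsLE 2 x' = RootsLE 2 y' := by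
  constructor
  · rintro ⟨z, hx, hy⟩
    obtain ⟨x', hdx, hlx⟩ := decompose hx
    obtain ⟨y', hdy, hly⟩ := decompose hy
    exact ⟨x', y', hdx, hdy,
      (rootsLE_eq_of_deriv hlx).trans (rootsLE_eq_of_deriv hly).symm⟩
  · rintro ⟨x', y', hdx, hdy, hroots⟩
    obtain ⟨r, hr, hrx⟩ := root_exists x'
    have hry : DerivLE 2 r y' := by
      have hmem : r ∈ RootsLE 2 y' := hroots ▸ (⟨hr, hrx⟩ : r ∈ RootsLE 2 x')
      exact hmem.2
    obtain ⟨w, hw1, hw2⟩ := join_up hrx hry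
    exact ⟨w, (derivD_to_derivLE3 hdx).trans (derivLE2_to_3 hw1),
      (derivD_to_derivLE3 hdy).trans (derivLE2_to_3 hw2)⟩
end

section
/- Let r be a ≤3-irreducible word containing at least three distinct symbols. Then Reg(r) can be written as w(abc)^ℓ ab, where a, b, c are pairwise distinct symbols, ℓ ∈ {0,1}, and w is a word of length at most three over the alphabet {a, b, c}. Furthermore, if Reg(r) ⇒*_{3_d} z, then z can be written as w(abc)^m ab for some m ≥ ℓ. Also, the symbol of r immediately following the prefix Reg(r) (if Reg(r) is a proper prefix of r) is not c. -/
section AuxRegion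
variable {α : Type*}

private def perF (d : ℕ) (h p q s : α) (j : ℕ) : α :=
  if j < d then h else [p, q, s].getD ((j - d) % 3) p

private lemma perF_per (d : ℕ) (h p q s : α) :
    ∀ j, d ≤ j → perF d h p q s (j + 3) = perF d h p q s j := by
  intro j hj
  simp only [perF, if_neg (by omega : ¬ j + 3 < d), if_neg (by omega : ¬ j < d)]
  congr 1
  omega

private lemma perShift (f : ℕ → α) (d : ℕ) (hper : ∀ j, d ≤ j → f (j + 3) = f j) :
    ∀ (l s : ℕ), d ≤ s → (List.range' (s + 3) l).map f = (List.range' s l).map f := by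
  intro l
  induction l with
  | zero => intro s _; simp
  | succ l ih =>
    intro s hs
    rw [List.range'_succ, List.range'_succ, List.map_cons, List.map_cons,
      hper s hs, show s + 3 + 1 = (s + 1) + 3 from rfl]
    rw [ih (s + 1) (by omega)]

private lemma range'_app (s m n : ℕ) :
    List.range' s m ++ List.range' (s + m) n = List.range' s (m + n) := by
  have := List.range'_append (s := s) (m := m) (n := n) (step := 1)
  simpa [Nat.add_comm] using this

private lemma rangeSplit (i wl : ℕ) :
    List.range (i + 3 + wl) = List.range' 0 i ++ (List.range' i 3 ++ List.range' (i + 3) wl) := by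
  have h2 : List.range' i 3 ++ List.range' (i + 3) wl = List.range' i (3 + wl) := range'_app i 3 wl
  have h1 : List.range' 0 i ++ List.range' i (3 + wl) = List.range' 0 (i + (3 + wl)) := by
    have := range'_app 0 i (3 + wl); simpa using this
  rw [List.range_eq_range', show i + 3 + wl = i + (3 + wl) by ring, ← h1, ← h2]

private lemma rangeSplit4 (i wl : ℕ) :
    List.range (i + 3 + wl + 3)
      = List.range' 0 i ++ (List.range' i 3 ++ (List.range' (i + 3) 3 ++ List.range' (i + 6) wl)) := by
  have h3 : List.range' (i + 3) 3 ++ List.range' (i + 6) wl = List.range' (i + 3) (3 + wl) := by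
    have := range'_app (i + 3) 3 wl; simpa [show i + 3 + 3 = i + 6 from rfl] using this
  have h2 : List.range' i 3 ++ List.range' (i + 3) (3 + wl) = List.range' i (3 + (3 + wl)) :=
    range'_app i 3 (3 + wl)
  have h1 : List.range' 0 i ++ List.range' i (3 + (3 + wl)) = List.range' 0 (i + (3 + (3 + wl))) := by
    have := range'_app 0 i (3 + (3 + wl)); simpa using this
  rw [List.range_eq_range', show i + 3 + wl + 3 = i + (3 + (3 + wl)) by ring, ← h1, ← h2, ← h3]

private lemma dupD_step (f : ℕ → α) (d : ℕ)
    (hper : ∀ j, d ≤ j → f (j + 3) = f j)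
    (hbad : d = 1 → f 0 = f 2) (hd : d ≤ 1)
    {n : ℕ} {z : List α}
    (h : DupD 3 ((List.range n).map f) z) :
    z = (List.range (n + 3)).map f := by
  obtain ⟨u, v, w, hx, hv3, hnd, hy⟩ := h
  have hn : n = u.length + 3 + w.length := by
    have := congrArg List.length hx
    simp [hv3] at this; omega
  set i := u.length with hi
  have key : (List.range n).map f
      = (List.range' 0 i).map f ++ ((List.range' i 3).map f ++ (List.range' (i + 3) w.length).map f) := by
    rw [← List.map_append, ← List.map_append, ← rangeSplit, ← hn]
  have h1 : u ++ (v ++ w)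
      = (List.range' 0 i).map f ++ ((List.range' i 3).map f ++ (List.range' (i + 3) w.length).map f) := by
    rw [← List.append_assoc, ← hx, key]
  obtain ⟨hu, hvw⟩ := List.append_inj h1 (by simp [hi])
  obtain ⟨hv, hw⟩ := List.append_inj hvw (by simp [hv3])
  by_cases hdi : d ≤ i
  · have hv2 : (List.range' (i + 3) 3).map f = v := by
      have := perShift f d hper 3 i hdi; rw [this, ← hv]
    have hw2 : (List.range' (i + 6) w.length).map f = w := by
      have := perShift f d hper w.length (i + 3) (by omega)
      rw [show i + 6 = i + 3 + 3 from rfl, this, ← hw]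
    rw [hy, show n + 3 = i + 3 + w.length + 3 by omega, rangeSplit4,
      List.map_append, List.map_append, List.map_append, ← hu, ← hv, hv2, hw2]
    simp [List.append_assoc]
  · exfalso
    have hi0 : i = 0 := by omega
    have hd1 : d = 1 := by omega
    have hveq : v = [f 0, f 1, f 2] := by
      rw [hv, hi0]
      simp [List.range'_succ]
    rw [hveq] at hnd
    simp [hbad hd1] at hnd

private lemma derivD_iter (f : ℕ → α) (d : ℕ)
    (hper : ∀ j, d ≤ j → f (j + 3) = f j)
    (hbad : d = 1 → f 0 = f 2) (hd : d ≤ 1)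
    {n : ℕ} {z : List α}
    (h : DerivD 3 ((List.range n).map f) z) :
    ∃ m, z = (List.range (n + 3 * m)).map f := by
  induction h with
  | refl => exact ⟨0, by simp⟩
  | tail hxc hcz ih =>
    obtain ⟨m, rfl⟩ := ih
    refine ⟨m + 1, ?_⟩
    have := dupD_step f d hper hbad hd hcz
    rw [this, show n + 3 * m + 3 = n + 3 * (m + 1) by ring]

private lemma region_main (f : ℕ → α) (d k : ℕ) (a b c : α) (w : List α) (ℓ : ℕ)
    (hd : d ≤ 1) (hdk : d ≤ k)
    (hper : ∀ j, d ≤ j → f (j + 3) = f j) (hbad : d = 1 → f 0 = f 2)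
    (hbase : (List.range k).map f = w ++ (List.replicate ℓ [a, b, c]).flatten ++ [a, b])
    (hc : f k = c) (ha : f (k + 1) = a) (hb : f (k + 2) = b) :
    ∀ z, DerivD 3 (w ++ (List.replicate ℓ [a, b, c]).flatten ++ [a, b]) z →
      ∃ m, ℓ ≤ m ∧ z = w ++ (List.replicate m [a, b, c]).flatten ++ [a, b] := by
  have hiter : ∀ m j, d ≤ j → f (j + 3 * m) = f j := by
    intro m
    induction m with
    | zero => simp
    | succ m ih =>
      intro j hj
      rw [show j + 3 * (m + 1) = (j + 3 * m) + 3 by ring, hper _ (by omega), ih j hj]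
  have shape : ∀ m, (List.range (k + 3 * m)).map f
      = w ++ (List.replicate (ℓ + m) [a, b, c]).flatten ++ [a, b] := by
    intro m
    induction m with
    | zero => simpa using hbase
    | succ m ih =>
      have h0 : f (k + 3 * m) = c := (hiter m k hdk).trans hc
      have h1 : f (k + 3 * m + 1) = a := by
        rw [show k + 3 * m + 1 = (k + 1) + 3 * m by ring, hiter m (k + 1) (by omega), ha]
      have h2 : f (k + 3 * m + 2) = b := by
        rw [show k + 3 * m + 2 = (k + 2) + 3 * m by ring, hiter m (k + 2) (by omega), hb]
      rw [show k + 3 * (m + 1) = ((k + 3 * m) + 1 + 1) + 1 by ring, List.range_succ,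
        List.range_succ, List.range_succ]
      simp only [List.map_append, List.map_cons, List.map_nil, ih, h0, h1, h2]
      rw [show ℓ + (m + 1) = (ℓ + m) + 1 by ring, List.replicate_succ']
      simp [List.append_assoc]
  intro z hz
  rw [← hbase] at hz
  obtain ⟨m, rfl⟩ := derivD_iter f d hper hbad hd hz
  exact ⟨ℓ + m, by omega, shape m⟩

end AuxRegion

/-- Lemma 9: for a `≤3`-irreducible word `r` with at least three distinct
symbols, `Reg(r) = w (abc)^ℓ ab` with `a, b, c` pairwise distinct, `ℓ ∈ {0,1}` and `w` of
length at most three over `{a,b,c}`; every `z` with `Reg(r) ⇒*_{3_d} z` has the form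
`w (abc)^m ab` with `m ≥ ℓ`; and the symbol of `r` right after the prefix `Reg(r)` is not `c`. -/
theorem region_structure (q : ℕ) (r : List (Fin q)) (hirr : IrredLE 3 r) (h3 : Has3 r) :
    ∃ (a b c : Fin q) (w : List (Fin q)) (ℓ : ℕ),
      a ≠ b ∧ b ≠ c ∧ a ≠ c ∧ ℓ ≤ 1 ∧ w.length ≤ 3 ∧
      (∀ s ∈ w, s = a ∨ s = b ∨ s = c) ∧
      Reg r = w ++ (List.replicate ℓ [a, b, c]).flatten ++ [a, b] ∧
      (∀ z : List (Fin q), DerivD 3 (Reg r) z →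
        ∃ m : ℕ, ℓ ≤ m ∧ z = w ++ (List.replicate m [a, b, c]).flatten ++ [a, b]) ∧
      (∀ s : Fin q, r[(Reg r).length]? = some s → s ≠ c) := by
  have hlen3 : 3 ≤ r.length := le_trans h3 (List.toFinset_card_le r)
  rcases r with _ | ⟨r1, r⟩
  · simp at hlen3
  rcases r with _ | ⟨r2, r⟩
  · simp at hlen3
  rcases r with _ | ⟨r3, rest⟩
  · simp at hlen3
  have h12 : r1 ≠ r2 := by
    rintro rfl; exact hirr ⟨[], [r1], r3 :: rest, by simp, by simp, by simp⟩
  have h23 : r2 ≠ r3 := by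
    rintro rfl; exact hirr ⟨[r1], [r2], rest, by simp, by simp, by simp⟩
  by_cases h13 : r1 = r3
  · -- Case B : r1 = r3
    subst h13
    rcases rest with _ | ⟨r4, rest⟩
    · exfalso
      have h3' : 3 ≤ ([r1, r2, r1] : List (Fin q)).toFinset.card := h3
      have hsub : ([r1, r2, r1] : List (Fin q)).toFinset ⊆ {r1, r2} := by
        intro x hx; simp at hx ⊢; tauto
      have hle := Finset.card_le_card hsub
      have h2' : ({r1, r2} : Finset (Fin q)).card ≤ 2 := by
        apply le_trans (Finset.card_insert_le _ _); simp
      omega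
    have h14 : r1 ≠ r4 := by
      rintro rfl; exact hirr ⟨[r1, r2], [r1], rest, by simp, by simp, by simp⟩
    have h24 : r2 ≠ r4 := by
      rintro rfl; exact hirr ⟨[], [r1, r2], rest, by simp, by simp, by simp⟩
    by_cases h25 : (some r2 : Option (Fin q)) = rest[0]?
    · -- rest starts with r2
      rcases rest with _ | ⟨r5, rest⟩
      · simp at h25
      simp only [List.getElem?_cons_zero, Option.some.injEq] at h25
      subst h25
      by_cases h16 : (some r1 : Option (Fin q)) = rest[0]?
      · -- Case B3 : Reg = r1 r2 r1 r4 r2 r1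
        rcases rest with _ | ⟨r6, rest⟩
        · simp at h16
        simp only [List.getElem?_cons_zero, Option.some.injEq] at h16
        subst h16
        have hreg : Reg (r1 :: r2 :: r1 :: r4 :: r2 :: r1 :: rest)
            = [r1] ++ (List.replicate 1 [r2, r1, r4]).flatten ++ [r2, r1] := by
          simp [Reg]
        refine ⟨r2, r1, r4, [r1], 1, h12.symm, h14, h24, le_refl 1, by norm_num, ?_, hreg, ?_, ?_⟩
        · intro s hs; simp at hs; tauto
        · rw [hreg]
          exact region_main (perF 1 r1 r2 r1 r4) 1 6 r2 r1 r4 [r1] 1 (le_refl 1) (by norm_num)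
            (perF_per _ _ _ _ _) (fun _ => by simp [perF])
            (by simp [perF, List.range_succ]) (by simp [perF]) (by simp [perF]) (by simp [perF])
        · intro s hs
          simp only [hreg] at hs
          simp at hs
          rcases rest with _ | ⟨r7, rest⟩
          · simp at hs
          simp at hs
          intro hc
          exact hirr ⟨[r1], [r2, r1, r4], rest, by simp, by simp, by simp [hs, hc]⟩
      · -- Case B2 : Reg = r1 r2 r1 r4 r2
        have hreg : Reg (r1 :: r2 :: r1 :: r4 :: r2 :: rest)
            = [r1, r2, r1] ++ (List.replicate 0 [r4, r2, r1]).flatten ++ [r4, r2] := by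
          simp [Reg, h16]
        refine ⟨r4, r2, r1, [r1, r2, r1], 0, fun h => h24 h.symm, h12.symm, fun h => h14 h.symm,
          by norm_num, by norm_num, ?_, hreg, ?_, ?_⟩
        · intro s hs; simp at hs; tauto
        · rw [hreg]
          exact region_main (perF 1 r1 r2 r1 r4) 1 5 r4 r2 r1 [r1, r2, r1] 0 (le_refl 1)
            (by norm_num) (perF_per _ _ _ _ _) (fun _ => by simp [perF])
            (by simp [perF, List.range_succ]) (by simp [perF]) (by simp [perF]) (by simp [perF])
        · intro s hs
          simp only [hreg] at hs
          simp at hs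
          rintro rfl
          exact h16 (by simp [hs])
    · -- Case B1 : Reg = r1 r2 r1 r4
      have hreg : Reg (r1 :: r2 :: r1 :: r4 :: rest)
          = [r1, r2] ++ (List.replicate 0 [r1, r4, r2]).flatten ++ [r1, r4] := by
        simp [Reg, h25]
      refine ⟨r1, r4, r2, [r1, r2], 0, h14, h24.symm, h12, by norm_num, by norm_num, ?_, hreg,
        ?_, ?_⟩
      · intro s hs; simp at hs; tauto
      · rw [hreg]
        exact region_main (perF 1 r1 r2 r1 r4) 1 4 r1 r4 r2 [r1, r2] 0 (le_refl 1) (by norm_num)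
          (perF_per _ _ _ _ _) (fun _ => by simp [perF])
          (by simp [perF, List.range_succ]) (by simp [perF]) (by simp [perF]) (by simp [perF])
      · intro s hs
        simp only [hreg] at hs
        simp at hs
        rintro rfl
        exact h25 (by simp [hs])
  · -- Case A : r1 ≠ r3
    by_cases h14 : (some r1 : Option (Fin q)) = rest[0]?
    · rcases rest with _ | ⟨r4, rest⟩
      · simp at h14
      simp only [List.getElem?_cons_zero, Option.some.injEq] at h14
      subst h14
      by_cases h25 : (some r2 : Option (Fin q)) = rest[0]?
      · -- Case A3 : Reg = r1 r2 r3 r1 r2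
        rcases rest with _ | ⟨r5, rest⟩
        · simp at h25
        simp only [List.getElem?_cons_zero, Option.some.injEq] at h25
        subst h25
        have hreg : Reg (r1 :: r2 :: r3 :: r1 :: r2 :: rest)
            = [] ++ (List.replicate 1 [r1, r2, r3]).flatten ++ [r1, r2] := by
          simp [Reg, h13]
        refine ⟨r1, r2, r3, [], 1, h12, h23, h13, le_refl 1, by norm_num, ?_, hreg, ?_, ?_⟩
        · intro s hs; simp at hs
        · rw [hreg]
          exact region_main (perF 0 r1 r1 r2 r3) 0 5 r1 r2 r3 [] 1 (by norm_num) (by norm_num)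
            (perF_per _ _ _ _ _) (fun h => absurd h (by norm_num))
            (by simp [perF, List.range_succ]) (by simp [perF]) (by simp [perF]) (by simp [perF])
        · intro s hs
          simp only [hreg] at hs
          simp at hs
          rcases rest with _ | ⟨r6, rest⟩
          · simp at hs
          simp at hs
          intro hc
          exact hirr ⟨[], [r1, r2, r3], rest, by simp, by simp, by simp [hs, hc]⟩
      · -- Case A2 : Reg = r1 r2 r3 r1
        have hreg : Reg (r1 :: r2 :: r3 :: r1 :: rest)
            = [r1, r2] ++ (List.replicate 0 [r3, r1, r2]).flatten ++ [r3, r1] := by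
          simp [Reg, h13, h25]
        refine ⟨r3, r1, r2, [r1, r2], 0, fun h => h13 h.symm, h12, fun h => h23 h.symm,
          by norm_num, by norm_num, ?_, hreg, ?_, ?_⟩
        · intro s hs; simp at hs; tauto
        · rw [hreg]
          exact region_main (perF 0 r1 r1 r2 r3) 0 4 r3 r1 r2 [r1, r2] 0 (by norm_num)
            (by norm_num) (perF_per _ _ _ _ _) (fun h => absurd h (by norm_num))
            (by simp [perF, List.range_succ]) (by simp [perF]) (by simp [perF]) (by simp [perF])
        · intro s hs
          simp only [hreg] at hs
          simp at hs
          rintro rfl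
          exact h25 (by simp [hs])
    · -- Case A1 : Reg = r1 r2 r3
      have hreg : Reg (r1 :: r2 :: r3 :: rest)
          = [r1] ++ (List.replicate 0 [r2, r3, r1]).flatten ++ [r2, r3] := by
        simp [Reg, h13, h14]
      refine ⟨r2, r3, r1, [r1], 0, h23, fun h => h13 h.symm, fun h => h12 h.symm,
        by norm_num, by norm_num, ?_, hreg, ?_, ?_⟩
      · intro s hs; simp at hs; tauto
      · rw [hreg]
        exact region_main (perF 0 r1 r1 r2 r3) 0 3 r2 r3 r1 [r1] 0 (by norm_num) (by norm_num)
          (perF_per _ _ _ _ _) (fun h => absurd h (by norm_num))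
          (by simp [perF, List.range_succ]) (by simp [perF]) (by simp [perF]) (by simp [perF])
      · intro s hs
        simp only [hreg] at hs
        simp at hs
        rintro rfl
        exact h14 (by simp [hs])
end

section
/- Over the alphabet Σ₃ = {0,1,2}, the words x = 012012 and y = 011112 satisfy R_{≤3}(x) = R_{≤3}(y) = {012}, yet x and y are not ≤3-confusable (every ≤3-descendant of x contains an occurrence of the symbol 2 to the left of an occurrence of the symbol 0, whereas no ≤3-descendant of y does). -/
section Aux

lemma dupLE_indices {α : Type*} {k : ℕ} {c x : List α} (h : DupLE k c x) :
    ∃ i l, (1 ≤ l ∧ l ≤ k) ∧ (i + 2 * l ≤ x.length ∧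
      (x.drop i).take l = (x.drop (i + l)).take l) ∧
      c = x.take (i + l) ++ x.drop (i + 2 * l) := by
  obtain ⟨u, v, w, hc, h1, h2, hx⟩ := h
  refine ⟨u.length, v.length, ⟨h1, h2⟩, ⟨?_, ?_⟩, ?_⟩
  · subst hx; simp only [List.length_append]; omega
  · subst hx
    have e1 : (u ++ v ++ v ++ w).drop u.length = v ++ v ++ w := by
      have h : u ++ v ++ v ++ w = u ++ (v ++ v ++ w) := by simp
      rw [h, List.drop_left]
    have e2 : (u ++ v ++ v ++ w).drop (u.length + v.length) = v ++ w := by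
      have h : u ++ v ++ v ++ w = (u ++ v) ++ (v ++ w) := by simp
      rw [h, show u.length + v.length = (u ++ v).length by simp, List.drop_left]
    rw [e1, e2]
    have h : v ++ v ++ w = v ++ (v ++ w) := by simp
    rw [h, List.take_left' rfl, List.take_left' rfl]
  · subst hx hc
    have e2 : (u ++ v ++ v ++ w).take (u.length + v.length) = u ++ v := by
      have h : u ++ v ++ v ++ w = (u ++ v) ++ (v ++ w) := by simp
      rw [h, show u.length + v.length = (u ++ v).length by simp, List.take_left]
    have e3 : (u ++ v ++ v ++ w).drop (u.length + 2 * v.length) = w := by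
      have hl : u.length + 2 * v.length = (u ++ v ++ v).length := by
        simp only [List.length_append]; omega
      have h : u ++ v ++ v ++ w = (u ++ v ++ v) ++ w := by simp
      rw [hl, h, List.drop_left]
    rw [e2, e3]

/-- Generic computation of single-step predecessors of a concrete word. -/
lemma preds_of {c x : List (Fin 3)} (P : List (Fin 3) → Prop) (h : DupLE 3 c x)
    (key : ∀ i < x.length, ∀ l < 4,
      (1 ≤ l ∧ i + 2 * l ≤ x.length ∧
        (x.drop i).take l = (x.drop (i + l)).take l) →
      P (x.take (i + l) ++ x.drop (i + 2 * l))) : P c := by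
  obtain ⟨i, l, ⟨h1, h2⟩, ⟨h3, h4⟩, h5⟩ := dupLE_indices h
  subst h5
  exact key i (by omega) l (by omega) ⟨h1, h3, h4⟩

lemma pred_x {c : List (Fin 3)} (h : DupLE 3 c [0, 1, 2, 0, 1, 2]) : c = [0, 1, 2] :=
  preds_of (fun c => c = [0, 1, 2]) h (by decide)

lemma pred_y {c : List (Fin 3)} (h : DupLE 3 c [0, 1, 1, 1, 1, 2]) :
    c = [0, 1, 1, 1, 2] ∨ c = [0, 1, 1, 2] :=
  preds_of (fun c => c = [0, 1, 1, 1, 2] ∨ c = [0, 1, 1, 2]) h (by decide)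

lemma pred_01112 {c : List (Fin 3)} (h : DupLE 3 c [0, 1, 1, 1, 2]) : c = [0, 1, 1, 2] :=
  preds_of (fun c => c = [0, 1, 1, 2]) h (by decide)

lemma pred_0112 {c : List (Fin 3)} (h : DupLE 3 c [0, 1, 1, 2]) : c = [0, 1, 2] :=
  preds_of (fun c => c = [0, 1, 2]) h (by decide)

lemma no_pred_012 {c : List (Fin 3)} (h : DupLE 3 c [0, 1, 2]) : False :=
  preds_of (fun _ => False) h (by decide)

lemma anc_012 {z : List (Fin 3)} (h : DerivLE 3 z [0, 1, 2]) : z = [0, 1, 2] := by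
  rcases h.cases_tail with h | ⟨c, _, hc⟩
  · exact h.symm
  · exact absurd hc no_pred_012

lemma anc_0112 {z : List (Fin 3)} (h : DerivLE 3 z [0, 1, 1, 2]) :
    z = [0, 1, 1, 2] ∨ z = [0, 1, 2] := by
  rcases h.cases_tail with h | ⟨c, hzc, hc⟩
  · exact Or.inl h.symm
  · rw [pred_0112 hc] at hzc; exact Or.inr (anc_012 hzc)

lemma anc_01112 {z : List (Fin 3)} (h : DerivLE 3 z [0, 1, 1, 1, 2]) :
    z = [0, 1, 1, 1, 2] ∨ z = [0, 1, 1, 2] ∨ z = [0, 1, 2] := by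
  rcases h.cases_tail with h | ⟨c, hzc, hc⟩
  · exact Or.inl h.symm
  · rw [pred_01112 hc] at hzc; exact Or.inr (anc_0112 hzc)

lemma anc_y {z : List (Fin 3)} (h : DerivLE 3 z [0, 1, 1, 1, 1, 2]) :
    z = [0, 1, 1, 1, 1, 2] ∨ z = [0, 1, 1, 1, 2] ∨ z = [0, 1, 1, 2] ∨ z = [0, 1, 2] := by
  rcases h.cases_tail with h | ⟨c, hzc, hc⟩
  · exact Or.inl h.symm
  · rcases pred_y hc with h | h <;> subst h
    · rcases anc_01112 hzc with h | h | h <;> simp [h]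
    · rcases anc_0112 hzc with h | h <;> simp [h]

lemma anc_x {z : List (Fin 3)} (h : DerivLE 3 z [0, 1, 2, 0, 1, 2]) :
    z = [0, 1, 2, 0, 1, 2] ∨ z = [0, 1, 2] := by
  rcases h.cases_tail with h | ⟨c, hzc, hc⟩
  · exact Or.inl h.symm
  · rw [pred_x hc] at hzc; exact Or.inr (anc_012 hzc)

lemma irred_012 : IrredLE 3 ([0, 1, 2] : List (Fin 3)) := by
  rintro ⟨u, v, w, h1, h2, h3⟩
  exact no_pred_012 (c := u ++ v ++ w) ⟨u, v, w, rfl, h1, h2, h3⟩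

lemma deriv_012_x : DerivLE 3 ([0, 1, 2] : List (Fin 3)) [0, 1, 2, 0, 1, 2] :=
  Relation.ReflTransGen.single ⟨[], [0, 1, 2], [], by simp, by simp, by simp, by simp⟩

lemma deriv_012_y : DerivLE 3 ([0, 1, 2] : List (Fin 3)) [0, 1, 1, 1, 1, 2] := by
  have s1 : DupLE 3 ([0, 1, 2] : List (Fin 3)) [0, 1, 1, 2] :=
    ⟨[0], [1], [2], by simp, by simp, by simp, by simp⟩
  have s2 : DupLE 3 ([0, 1, 1, 2] : List (Fin 3)) [0, 1, 1, 1, 2] :=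
    ⟨[0], [1], [1, 2], by simp, by simp, by simp, by simp⟩
  have s3 : DupLE 3 ([0, 1, 1, 1, 2] : List (Fin 3)) [0, 1, 1, 1, 1, 2] :=
    ⟨[0], [1], [1, 1, 2], by simp, by simp, by simp, by simp⟩
  exact Relation.ReflTransGen.head s1 (Relation.ReflTransGen.head s2
    (Relation.ReflTransGen.single s3))

end Aux

section Invariants

/-- Descendants of `x` always have a `2` (weakly) before a `0`. -/
def TwoZero (w : List (Fin 3)) : Prop :=
  ∃ i j : ℕ, i ≤ j ∧ w[i]? = some 2 ∧ w[j]? = some 0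

/-- Descendants of `y`: every `0` occurs at least 4 positions before every `2`. -/
def Good (w : List (Fin 3)) : Prop :=
  ∀ i j : ℕ, w[i]? = some 2 → w[j]? = some 0 → j + 4 ≤ i

lemma getElem?_dup_lt {α : Type*} (u v w : List α) {i : ℕ} (h : i < u.length + v.length) :
    (u ++ v ++ v ++ w)[i]? = (u ++ v ++ w)[i]? := by
  have h' : i < (u ++ v).length := by simp only [List.length_append]; omega
  calc (u ++ v ++ v ++ w)[i]? = ((u ++ v) ++ (v ++ w))[i]? := by
        rw [List.append_assoc (u ++ v) v w]
    _ = (u ++ v)[i]? := List.getElem?_append_left h'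
    _ = ((u ++ v) ++ w)[i]? := (List.getElem?_append_left h').symm

lemma getElem?_dup_ge {α : Type*} (u v w : List α) {i : ℕ} (h : u.length + v.length ≤ i) :
    (u ++ v ++ v ++ w)[i + v.length]? = (u ++ v ++ w)[i]? := by
  calc (u ++ v ++ v ++ w)[i + v.length]?
      = w[i + v.length - (u ++ v ++ v).length]? :=
        List.getElem?_append_right (by simp only [List.length_append]; omega)
    _ = w[i - (u ++ v).length]? := by
        congr 1; simp only [List.length_append]; omega
    _ = ((u ++ v) ++ w)[i]? := (List.getElem?_append_right
        (by simp only [List.length_append]; omega)).symm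

/-- backward map: every position of the duplicated word matches a position of the original -/
lemma getElem?_dup_back {α : Type*} (u v w : List α) (i : ℕ) :
    (u ++ v ++ v ++ w)[i]? =
      (u ++ v ++ w)[if i < u.length + v.length then i else i - v.length]? := by
  split_ifs with h
  · exact getElem?_dup_lt u v w h
  · push_neg at h
    calc (u ++ v ++ v ++ w)[i]? = ((u ++ v) ++ (v ++ w))[i]? := by
          rw [List.append_assoc (u ++ v) v w]
      _ = (v ++ w)[i - (u ++ v).length]? :=
          List.getElem?_append_right (by simp only [List.length_append]; omega)
      _ = (v ++ w)[i - v.length - u.length]? := by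
          congr 1; simp only [List.length_append]; omega
      _ = (u ++ (v ++ w))[i - v.length]? := (List.getElem?_append_right (by omega)).symm
      _ = (u ++ v ++ w)[i - v.length]? := by rw [← List.append_assoc]

lemma twoZero_step {s t : List (Fin 3)} (h : DupLE 3 s t) (hs : TwoZero s) : TwoZero t := by
  obtain ⟨u, v, w, hsd, _, _, htd⟩ := h
  obtain ⟨i, j, hij, h2, h0⟩ := hs
  subst hsd htd
  refine ⟨if i < u.length + v.length then i else i + v.length,
          if j < u.length + v.length then j else j + v.length, ?_, ?_, ?_⟩
  · split_ifs <;> omega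
  · split_ifs with h
    · rw [getElem?_dup_lt u v w h]; exact h2
    · rw [getElem?_dup_ge u v w (by omega)]; exact h2
  · split_ifs with h
    · rw [getElem?_dup_lt u v w h]; exact h0
    · rw [getElem?_dup_ge u v w (by omega)]; exact h0

lemma good_step {s t : List (Fin 3)} (h : DupLE 3 s t) (hs : Good s) : Good t := by
  obtain ⟨u, v, w, hsd, hv1, hv3, htd⟩ := h
  subst hsd htd
  intro i j h2 h0
  rw [getElem?_dup_back u v w i] at h2
  rw [getElem?_dup_back u v w j] at h0
  have key := hs _ _ h2 h0
  have hib : (if i < u.length + v.length then i else i - v.length) <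
      (u ++ v ++ w).length := by
    by_contra hc
    push_neg at hc
    rw [List.getElem?_eq_none hc] at h2
    cases h2
  simp only [List.length_append] at hib
  split_ifs at key <;> omega

lemma twoZero_deriv {s t : List (Fin 3)} (h : DerivLE 3 s t) (hs : TwoZero s) : TwoZero t := by
  induction h with
  | refl => exact hs
  | tail _ hstep ih => exact twoZero_step hstep ih

lemma good_deriv {s t : List (Fin 3)} (h : DerivLE 3 s t) (hs : Good s) : Good t := by
  induction h with
  | refl => exact hs
  | tail _ hstep ih => exact good_step hstep ih

lemma twoZero_x : TwoZero [0, 1, 2, 0, 1, 2] := ⟨2, 3, by omega, rfl, rfl⟩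

lemma good_y : Good [0, 1, 1, 1, 1, 2] := by
  intro i j h2 h0
  have hi : i = 5 := by
    rcases i with _ | _ | _ | _ | _ | _ | i <;> simp_all
  have hj : j = 0 := by
    rcases j with _ | _ | _ | _ | _ | _ | j <;> simp_all
  omega

end Invariants

/-- Example 4: over `Σ₃`, the words `x = 012012` and `y = 011112` have
the same `≤3`-root set `{012}`, yet they are not `≤3`-confusable. -/
theorem example_not_confusable :
    RootsLE 3 ([0, 1, 2, 0, 1, 2] : List (Fin 3)) = {[0, 1, 2]} ∧
    RootsLE 3 ([0, 1, 1, 1, 1, 2] : List (Fin 3)) = {[0, 1, 2]} ∧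
    ¬ Confusable 3 ([0, 1, 2, 0, 1, 2] : List (Fin 3)) [0, 1, 1, 1, 1, 2] := by
  refine ⟨?_, ?_, ?_⟩
  · ext z
    simp only [Set.mem_singleton_iff, RootsLE, Set.mem_setOf_eq]
    constructor
    · rintro ⟨hirr, hder⟩
      rcases anc_x hder with h | h
      · subst h
        exact (hirr ⟨[], [0, 1, 2], [], by simp, by simp, by simp⟩).elim
      · exact h
    · rintro rfl; exact ⟨irred_012, deriv_012_x⟩
  · ext z
    simp only [Set.mem_singleton_iff, RootsLE, Set.mem_setOf_eq]
    constructor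
    · rintro ⟨hirr, hder⟩
      rcases anc_y hder with h | h | h | h
      · subst h; exact (hirr ⟨[0], [1], [1, 1, 2], by simp, by simp, by simp⟩).elim
      · subst h; exact (hirr ⟨[0], [1], [1, 2], by simp, by simp, by simp⟩).elim
      · subst h; exact (hirr ⟨[0], [1], [2], by simp, by simp, by simp⟩).elim
      · exact h
    · rintro rfl; exact ⟨irred_012, deriv_012_y⟩
  · rintro ⟨z, hx, hy⟩
    obtain ⟨i, j, hij, h2, h0⟩ := twoZero_deriv hx twoZero_x
    have hg := good_deriv hy good_y i j h2 h0
    omega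
end
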